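/- arXiv:2104.06027 — 3 statements merged into one kernel-verified Lean document; each statement's English description precedes it below -/
import Mathlib

section
/- Let 𝔰 : ℝ → ℝ be a C¹ increasing bijection with 𝔰(0) = 0, σ, 𝔰' > 0 continuous, ψ = (𝔰'∘𝔰^{-1})·(σ∘𝔰^{-1}), and μ(dx) = κ[σ²(x)𝔰'(x)]^{-1}dx a finite measure normalized to be a probability. Let (W_t) be a Brownian motion with jointly continuous local times (L_t^x) and a_ε → 0 as ε → 0. Then for every φ ∈ L¹(μ), almost surely, for all T > 0, sup_{t∈[0,T]} |κ a_ε^{-1} ∫₀ᵗ φ(𝔰^{-1}(W_s/a_ε))/ψ²(W_s/a_ε) ds − μ(φ)·L_t^0| → 0 as ε → 0. -/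
open Filter MeasureTheory Set ProbabilityTheory

/-- A (standard) Brownian motion: starts at 0, a.s. continuous paths, Gaussian
increments and independent increments. -/
def IsBrownianMotion {Ω : Type*} [MeasurableSpace Ω] (μ : Measure Ω)
    (W : ℝ → Ω → ℝ) : Prop :=
  (∀ t, Measurable (W t)) ∧
  (∀ ω, W 0 ω = 0) ∧
  (∀ᵐ ω ∂μ, Continuous fun t => W t ω) ∧
  (∀ s t : ℝ, 0 ≤ s → s ≤ t →
    μ.map (fun ω => W t ω - W s ω) = gaussianReal 0 (Real.toNNReal (t - s))) ∧
  (∀ n : ℕ, ∀ t : Fin (n + 1) → ℝ, Monotone t → 0 ≤ t 0 →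
    iIndepFun
      (fun i : Fin n => fun ω => W (t i.succ) ω - W (t i.castSucc) ω) μ)

/-- `L x t ω` is the (jointly continuous) local time family of the process `W`,
characterized by continuity, monotonicity in time and the occupation times formula. -/
def IsLocalTimeFamily {Ω : Type*} [MeasurableSpace Ω] (μ : Measure Ω)
    (W : ℝ → Ω → ℝ) (L : ℝ → ℝ → Ω → ℝ) : Prop :=
  (∀ x t, Measurable (L x t)) ∧
  (∀ᵐ ω ∂μ,
    Continuous (fun p : ℝ × ℝ => L p.1 p.2 ω) ∧
    (∀ x, Monotone fun t => L x t ω) ∧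
    (∀ x, L x 0 ω = 0) ∧
    (∀ t : ℝ, 0 ≤ t → ∀ φ : ℝ → ℝ, Measurable φ → (∀ y, 0 ≤ φ y) →
      ∫ s in (0:ℝ)..t, φ (W s ω) = ∫ x, φ x * L x t ω))

/-- The right-continuous generalized inverse of the local time at `0`. -/
noncomputable def invLocalTime {Ω : Type*} (L : ℝ → ℝ → Ω → ℝ)
    (t : ℝ) (ω : Ω) : ℝ :=
  sInf {u : ℝ | 0 ≤ u ∧ t < L 0 u ω}


open Filter MeasureTheory Set
open scoped ENNReal NNReal

lemma sInv_cont (s sInv : ℝ → ℝ) (hsmono : StrictMono s) (hsurj : Function.Surjective s)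
    (h2 : Function.RightInverse sInv s) : Continuous sInv := by
  have e := StrictMono.orderIsoOfSurjective s hsmono hsurj
  have : sInv = ⇑(StrictMono.orderIsoOfSurjective s hsmono hsurj).symm := by
    funext x
    apply hsmono.injective
    rw [h2 x]
    exact (StrictMono.orderIsoOfSurjective_self_symm_apply s hsmono hsurj x).symm
  rw [this]
  exact ((StrictMono.orderIsoOfSurjective s hsmono hsurj).symm.toHomeomorph).continuous

lemma cov (s : ℝ → ℝ) (hsC1 : ContDiff ℝ 1 s) (hsmono : StrictMono s)
    (hsurj : Function.Surjective s) (hs' : ∀ x, 0 < deriv s x)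
    (c : ℝ) (hc : 0 < c) (F : ℝ → ℝ) :
    ∫ x, F x = ∫ v, (c * deriv s v) * F (c * s v) := by
  have hderiv : ∀ v ∈ (univ : Set ℝ), HasDerivWithinAt (fun v => c * s v) (c * deriv s v) univ v :=
    fun v _ => (((hsC1.differentiable one_ne_zero v).hasDerivAt).const_mul c).hasDerivWithinAt
  have hinj : InjOn (fun v => c * s v) univ := fun x _ y _ h => by
    exact hsmono.injective (mul_left_cancel₀ hc.ne' h)
  have himg : (fun v => c * s v) '' univ = univ := by
    apply Set.eq_univ_of_forall
    intro y
    obtain ⟨v, hv⟩ := hsurj (y / c)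
    exact ⟨v, trivial, by simp only [hv]; field_simp⟩
  have := MeasureTheory.integral_image_eq_integral_abs_deriv_smul MeasurableSet.univ hderiv hinj F
  rw [himg] at this
  simp only [Measure.restrict_univ, smul_eq_mul] at this
  rw [this]
  congr 1
  funext v
  rw [abs_of_pos (mul_pos hc (hs' v))]

lemma lcov (s : ℝ → ℝ) (hsC1 : ContDiff ℝ 1 s) (hsmono : StrictMono s)
    (hsurj : Function.Surjective s) (hs' : ∀ x, 0 < deriv s x)
    (c : ℝ) (hc : 0 < c) (F : ℝ → ENNReal) :
    ∫⁻ x, F x = ∫⁻ v, ENNReal.ofReal (c * deriv s v) * F (c * s v) := by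
  have hderiv : ∀ v ∈ (univ : Set ℝ), HasFDerivWithinAt (fun v => c * s v)
      ((1 : ℝ →L[ℝ] ℝ).smulRight (c * deriv s v)) univ v :=
    fun v _ =>
      ((((hsC1.differentiable one_ne_zero v).hasDerivAt).const_mul c).hasDerivWithinAt).hasFDerivWithinAt
  have hinj : InjOn (fun v => c * s v) univ := fun x _ y _ h => by
    exact hsmono.injective (mul_left_cancel₀ hc.ne' h)
  have himg : (fun v => c * s v) '' univ = univ := by
    apply Set.eq_univ_of_forall
    intro y
    obtain ⟨v, hv⟩ := hsurj (y / c)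
    exact ⟨v, trivial, by simp only [hv]; field_simp⟩
  have := MeasureTheory.lintegral_image_eq_lintegral_abs_det_fderiv_mul volume MeasurableSet.univ
    hderiv hinj F
  rw [himg] at this
  simp only [Measure.restrict_univ, ContinuousLinearMap.det_smulRight, ContinuousLinearMap.one_apply, one_mul] at this
  rw [this]
  congr 1
  funext v
  rw [abs_of_pos (mul_pos hc (hs' v))]
open Filter MeasureTheory Set

lemma localtime_bound (w : ℝ → ℝ) (hw : Continuous w)
    (ℓ : ℝ → ℝ → ℝ) (hcont : Continuous fun p : ℝ × ℝ => ℓ p.1 p.2)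
    (hmono : ∀ x, Monotone (ℓ x)) (h0 : ∀ x, ℓ x 0 = 0)
    (hocc : ∀ t, 0 ≤ t → ∀ φ : ℝ → ℝ, Measurable φ → (∀ y, 0 ≤ φ y) →
      ∫ u in (0:ℝ)..t, φ (w u) = ∫ x, φ x * ℓ x t)
    (T : ℝ) (hT : 0 ≤ T) :
    ∃ B, 0 ≤ B ∧ ∀ x t, t ∈ Icc 0 T → 0 ≤ ℓ x t ∧ ℓ x t ≤ B := by
  have hℓT : Continuous fun x => ℓ x T := hcont.comp (continuous_id.prodMk continuous_const)
  have hnonneg : ∀ x t, 0 ≤ t → 0 ≤ ℓ x t := fun x t ht => (h0 x) ▸ hmono x ht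
  -- bound on the path
  obtain ⟨M, hM0, hM⟩ : ∃ M, 0 ≤ M ∧ ∀ u ∈ Icc (0:ℝ) T, |w u| ≤ M := by
    obtain ⟨M, hM⟩ := (isCompact_Icc.image (continuous_abs.comp hw)).bddAbove
    exact ⟨max M 0, le_max_right _ _, fun u hu =>
      le_trans (hM ⟨u, hu, rfl⟩) (le_max_left _ _)⟩
  -- local time vanishes away from the path range
  have hvanish : ∀ x, M < |x| → ℓ x T = 0 := by
    intro x0 hx0
    by_contra hne
    have hrpos : 0 < ℓ x0 T := lt_of_le_of_ne (hnonneg x0 T hT) (Ne.symm hne)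
    set r := ℓ x0 T with hr
    -- find δ
    have hcontx : ContinuousAt (fun y => ℓ y T) x0 := hℓT.continuousAt
    have hev : {y | r / 2 < ℓ y T} ∈ nhds x0 :=
      hcontx.preimage_mem_nhds (Ioi_mem_nhds (by linarith))
    obtain ⟨δ₀, hδ₀pos, hδ₀'⟩ := Metric.mem_nhds_iff.mp hev
    have hδ₀ : ∀ ⦃y : ℝ⦄, dist y x0 < δ₀ → r / 2 < ℓ y T := fun y hy => hδ₀' hy
    set δ : ℝ := min δ₀ (|x0| - M) with hδdef
    have hδpos : 0 < δ := lt_min hδ₀pos (by linarith)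
    set I : Set ℝ := Ioo (x0 - δ) (x0 + δ) with hI
    have hsubball : ∀ y ∈ I, r / 2 < ℓ y T := by
      intro y hy
      apply hδ₀
      rw [Real.dist_eq, abs_lt]
      constructor
      · linarith [hy.1, min_le_left δ₀ (|x0| - M)]
      · linarith [hy.2, min_le_left δ₀ (|x0| - M)]
    have hIbig : ∀ y ∈ I, M < |y| := by
      intro y hy
      have h1 : |y - x0| < δ := by rw [abs_lt]; constructor <;> [linarith [hy.1]; linarith [hy.2]]
      have h2 : |y - x0| < |x0| - M := lt_of_lt_of_le h1 (min_le_right _ _)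
      have := abs_sub_abs_le_abs_sub x0 y
      rw [abs_sub_comm x0 y] at this
      linarith
    set φ : ℝ → ℝ := I.indicator 1 with hφ
    have hφmeas : Measurable φ := (measurable_one.indicator measurableSet_Ioo)
    have hφnn : ∀ y, 0 ≤ φ y := by
      intro y; rw [hφ]; exact Set.indicator_nonneg (fun _ _ => zero_le_one) y
    have hLHS : ∫ u in (0:ℝ)..T, φ (w u) = 0 := by
      rw [intervalIntegral.integral_congr (g := fun _ => (0:ℝ)), intervalIntegral.integral_zero]
      intro u hu
      rw [Set.uIcc_of_le hT] at hu
      have : w u ∉ I := fun hc => absurd (hM u hu) (not_le.mpr (hIbig _ hc))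
      simp [hφ, Set.indicator_of_notMem this]
    have hRHS : ∫ x, φ x * ℓ x T = ∫ x in I, ℓ x T := by
      rw [← integral_indicator measurableSet_Ioo]
      congr 1
      funext y
      by_cases hy : y ∈ I <;> simp [hφ, Set.indicator_of_mem, Set.indicator_of_notMem, hy, ← hI]
    have hint : IntegrableOn (fun x => ℓ x T) I :=
      ((hℓT.continuousOn).integrableOn_compact isCompact_Icc).mono_set Ioo_subset_Icc_self
    have hlow : ∫ x in I, (r / 2) ≤ ∫ x in I, ℓ x T := by
      apply setIntegral_mono_on (integrableOn_const measure_Ioo_lt_top.ne) hint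
        measurableSet_Ioo
      intro y hy
      exact (hsubball y hy).le
    rw [setIntegral_const] at hlow
    have hvol : (volume I).toReal = 2 * δ := by
      rw [hI, Real.volume_Ioo, ENNReal.toReal_ofReal (by linarith)]
      ring
    rw [measureReal_def, hvol] at hlow
    have : ∫ x, φ x * ℓ x T = 0 := by rw [← hocc T hT φ hφmeas hφnn, hLHS]
    rw [hRHS] at this
    rw [this, smul_eq_mul] at hlow
    nlinarith
  -- bound on the compact part
  obtain ⟨B₀, hB₀⟩ : ∃ B₀, ∀ x ∈ Icc (-M) M, ℓ x T ≤ B₀ := by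
    obtain ⟨B₀, hB₀⟩ := (isCompact_Icc.image hℓT).bddAbove
    exact ⟨B₀, fun x hx => hB₀ ⟨x, hx, rfl⟩⟩
  refine ⟨max B₀ 0, le_max_right _ _, fun x t ht => ⟨hnonneg x t ht.1, ?_⟩⟩
  have hle : ℓ x t ≤ ℓ x T := hmono x ht.2
  rcases le_or_gt (|x|) M with hx | hx
  · rw [abs_le] at hx
    exact hle.trans ((hB₀ x ⟨hx.1, hx.2⟩).trans (le_max_left _ _))
  · have h0' : ℓ x t ≤ 0 := by rw [← hvanish x hx]; exact hle
    exact h0'.trans (le_max_right _ _)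
open Filter MeasureTheory Set

section
variable (s : ℝ → ℝ) (hsC1 : ContDiff ℝ 1 s) (hsmono : StrictMono s)
  (hsurj : Function.Surjective s) (hs' : ∀ x, 0 < deriv s x)
  (sInv : ℝ → ℝ) (hLinv : Function.LeftInverse sInv s)
  (hRinv : Function.RightInverse sInv s)
  (σ : ℝ → ℝ) (hσ : Continuous σ) (hσpos : ∀ x, 0 < σ x)
  (ψ : ℝ → ℝ) (hψ : ∀ w, ψ w = deriv s (sInv w) * σ (sInv w))
  (κ : ℝ) (hκ : 0 < κ)
  (μ : Measure ℝ)
  (hμ : μ = volume.withDensity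
      (fun x => ENNReal.ofReal (κ * ((σ x) ^ 2 * deriv s x)⁻¹)))
  (w : ℝ → ℝ) (hw : Continuous w)
  (ℓ : ℝ → ℝ → ℝ) (hcont : Continuous fun p : ℝ × ℝ => ℓ p.1 p.2)
  (hocc : ∀ t, 0 ≤ t → ∀ φ : ℝ → ℝ, Measurable φ → (∀ y, 0 ≤ φ y) →
      ∫ u in (0:ℝ)..t, φ (w u) = ∫ x, φ x * ℓ x t)

section
include hsC1 hsmono hsurj hs' hLinv hRinv hσ hσpos hψ hκ hμ hocc

lemma identity_nonneg
    (φp : ℝ → ℝ) (hφm : Measurable φp) (hφnn : ∀ v, 0 ≤ φp v)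
    (c : ℝ) (hc : 0 < c) (t : ℝ) (ht : 0 ≤ t) :
    κ * c⁻¹ * ∫ u in (0:ℝ)..t, φp (sInv (w u / c)) / (ψ (w u / c)) ^ 2
      = ∫ v, (κ * ((σ v) ^ 2 * deriv s v)⁻¹) * (φp v * ℓ (c * s v) t) := by
  have hsInvCont : Continuous sInv := sInv_cont s sInv hsmono hsurj hRinv
  have hderivCont : Continuous (deriv s) := hsC1.continuous_deriv le_rfl
  have hψcont : Continuous ψ := by
    have : ψ = fun x => deriv s (sInv x) * σ (sInv x) := funext hψ
    rw [this]
    exact (hderivCont.comp hsInvCont).mul (hσ.comp hsInvCont)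
  set G : ℝ → ℝ := fun x => φp (sInv (x / c)) / (ψ (x / c)) ^ 2 with hG
  have hGmeas : Measurable G := by
    apply Measurable.div
    · exact hφm.comp (hsInvCont.measurable.comp (measurable_id.div_const c))
    · exact ((hψcont.measurable.comp (measurable_id.div_const c)).pow_const 2)
  have hGnn : ∀ y, 0 ≤ G y := fun y => div_nonneg (hφnn _) (sq_nonneg _)
  have step1 : ∫ u in (0:ℝ)..t, φp (sInv (w u / c)) / (ψ (w u / c)) ^ 2
      = ∫ x, G x * ℓ x t := hocc t ht G hGmeas hGnn
  have step2 : ∫ x, G x * ℓ x t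
      = ∫ v, (c * deriv s v) * (G (c * s v) * ℓ (c * s v) t) :=
    cov s hsC1 hsmono hsurj hs' c hc _
  have hGval : ∀ v, G (c * s v) = φp v / (deriv s v * σ v) ^ 2 := by
    intro v
    have h1 : c * s v / c = s v := by field_simp
    rw [hG]
    simp only [h1, hLinv v, hψ (s v), hLinv v]
  rw [step1, step2, ← integral_const_mul]
  congr 1
  funext v
  rw [hGval v]
  have hd := hs' v
  have hσv := hσpos v
  field_simp

end
end
section
variable (s : ℝ → ℝ) (hsC1 : ContDiff ℝ 1 s) (hsmono : StrictMono s)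
  (hsurj : Function.Surjective s) (hs' : ∀ x, 0 < deriv s x)
  (sInv : ℝ → ℝ) (hLinv : Function.LeftInverse sInv s)
  (hRinv : Function.RightInverse sInv s)
  (σ : ℝ → ℝ) (hσ : Continuous σ) (hσpos : ∀ x, 0 < σ x)
  (ψ : ℝ → ℝ) (hψ : ∀ w, ψ w = deriv s (sInv w) * σ (sInv w))
  (κ : ℝ) (hκ : 0 < κ)
  (μ : Measure ℝ)
  (hμ : μ = volume.withDensity
      (fun x => ENNReal.ofReal (κ * ((σ x) ^ 2 * deriv s x)⁻¹)))
  (w : ℝ → ℝ) (hw : Continuous w)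
  (ℓ : ℝ → ℝ → ℝ)
  (hocc : ∀ t, 0 ≤ t → ∀ φ : ℝ → ℝ, Measurable φ → (∀ y, 0 ≤ φ y) →
      ∫ u in (0:ℝ)..t, φ (w u) = ∫ x, φ x * ℓ x t)

set_option linter.unusedSectionVars false

include hsC1 hsmono hsurj hs' hLinv hRinv hσ hσpos hψ hκ hμ hw hocc in
lemma intervalIntegrable_nonneg
    (φp : ℝ → ℝ) (hφm : Measurable φp) (hφnn : ∀ v, 0 ≤ φp v)
    (hφpInt : Integrable φp μ)
    (c : ℝ) (hc : 0 < c) (t : ℝ) (ht : 0 ≤ t)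
    (B : ℝ) (hB0 : 0 ≤ B) (hBmeas : Measurable fun x => ℓ x t)
    (hB : ∀ x, 0 ≤ ℓ x t ∧ ℓ x t ≤ B) :
    IntervalIntegrable (fun u => φp (sInv (w u / c)) / (ψ (w u / c)) ^ 2) volume 0 t := by
  have hsInvCont : Continuous sInv := sInv_cont s sInv hsmono hsurj hRinv
  have hderivCont : Continuous (deriv s) := hsC1.continuous_deriv le_rfl
  have hψcont : Continuous ψ := by
    have : ψ = fun x => deriv s (sInv x) * σ (sInv x) := funext hψ
    rw [this]
    exact (hderivCont.comp hsInvCont).mul (hσ.comp hsInvCont)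
  set G : ℝ → ℝ := fun x => φp (sInv (x / c)) / (ψ (x / c)) ^ 2 with hGdef
  have hGmeas : Measurable G := by
    apply Measurable.div
    · exact hφm.comp (hsInvCont.measurable.comp (measurable_id.div_const c))
    · exact ((hψcont.measurable.comp (measurable_id.div_const c)).pow_const 2)
  have hGnn : ∀ y, 0 ≤ G y := fun y => div_nonneg (hφnn _) (sq_nonneg _)
  have hGval : ∀ v, G (c * s v) = φp v / (deriv s v * σ v) ^ 2 := by
    intro v
    have h1 : c * s v / c = s v := by field_simp
    rw [hGdef]
    simp only [h1, hLinv v, hψ (s v)]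
  set F : ℝ → ℝ := fun u => G (w u) with hFdef
  have hFmeas : Measurable F := hGmeas.comp hw.measurable
  set dens : ℝ → ℝ≥0∞ := fun x => ENNReal.ofReal (κ * ((σ x) ^ 2 * deriv s x)⁻¹) with hdens
  have hdensmeas : Measurable dens := by
    apply ENNReal.measurable_ofReal.comp
    exact (continuous_const.mul (((hσ.pow 2).mul hderivCont).inv₀
      (fun x => (mul_pos (pow_pos (hσpos x) 2) (hs' x)).ne'))).measurable
  have hμfin : ∫⁻ v, dens v * ENNReal.ofReal (φp v) < ⊤ := by
    have h2 := hφpInt.hasFiniteIntegral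
    rw [hasFiniteIntegral_iff_norm] at h2
    have h1 : ∫⁻ v, ENNReal.ofReal (φp v) ∂μ < ⊤ := by
      refine lt_of_eq_of_lt ?_ h2
      exact lintegral_congr fun v => by rw [Real.norm_eq_abs, abs_of_nonneg (hφnn v)]
    rw [hμ, lintegral_withDensity_eq_lintegral_mul volume hdensmeas
      hφm.ennreal_ofReal] at h1
    simpa [Pi.mul_apply] using h1
  set C : ℝ≥0∞ := ENNReal.ofReal (c * B / κ) * ∫⁻ v, dens v * ENNReal.ofReal (φp v) with hC
  have hCfin : C < ⊤ := ENNReal.mul_lt_top ENNReal.ofReal_lt_top hμfin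
  have hGLbound : ∫⁻ x, ENNReal.ofReal (G x * ℓ x t) ≤ C := by
    rw [lcov s hsC1 hsmono hsurj hs' c hc]
    have hpt : ∀ v, ENNReal.ofReal (c * deriv s v) * ENNReal.ofReal (G (c * s v) * ℓ (c * s v) t)
        ≤ ENNReal.ofReal (c * B / κ) * (dens v * ENNReal.ofReal (φp v)) := by
      intro v
      have hd := hs' v
      have hσv := hσpos v
      have h1 : (0:ℝ) ≤ c * deriv s v := (mul_pos hc hd).le
      have h2 : (0:ℝ) ≤ c * B / κ := div_nonneg (mul_nonneg hc.le hB0) hκ.le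
      have h3 : (0:ℝ) ≤ κ * ((σ v) ^ 2 * deriv s v)⁻¹ :=
        (mul_pos hκ (inv_pos.mpr (mul_pos (pow_pos hσv 2) hd))).le
      rw [hGval v]
      simp only [hdens]
      rw [← ENNReal.ofReal_mul h1, ← ENNReal.ofReal_mul h3, ← ENNReal.ofReal_mul h2]
      apply ENNReal.ofReal_le_ofReal
      have hL1 : c * deriv s v * (φp v / (deriv s v * σ v) ^ 2 * ℓ (c * s v) t)
          = c * φp v * ℓ (c * s v) t * ((σ v) ^ 2 * deriv s v)⁻¹ := by
        field_simp
      have hL2 : c * B / κ * (κ * ((σ v) ^ 2 * deriv s v)⁻¹ * φp v)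
          = c * φp v * B * ((σ v) ^ 2 * deriv s v)⁻¹ := by
        field_simp
      rw [hL1, hL2]
      apply mul_le_mul_of_nonneg_right _ (inv_nonneg.mpr (mul_nonneg (sq_nonneg _) hd.le))
      exact mul_le_mul_of_nonneg_left (hB (c * s v)).2 (mul_nonneg hc.le (hφnn v))
    calc ∫⁻ v, ENNReal.ofReal (c * deriv s v) * ENNReal.ofReal (G (c * s v) * ℓ (c * s v) t)
        ≤ ∫⁻ v, ENNReal.ofReal (c * B / κ) * (dens v * ENNReal.ofReal (φp v)) :=
          lintegral_mono hpt
      _ = C := lintegral_const_mul _ (hdensmeas.mul hφm.ennreal_ofReal)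
  have key : ∫⁻ u in Ioc (0:ℝ) t, ENNReal.ofReal (F u) ≤ C := by
    have hsup : ∀ u, ENNReal.ofReal (F u) = ⨆ n : ℕ, ENNReal.ofReal (min (F u) n) := by
      intro u
      apply le_antisymm
      · refine le_iSup_of_le ⌈F u⌉₊ ?_
        rw [min_eq_left (Nat.le_ceil _)]
      · exact iSup_le fun n => ENNReal.ofReal_le_ofReal (min_le_left _ _)
    have hstep : ∀ n : ℕ, ∫⁻ u in Ioc (0:ℝ) t, ENNReal.ofReal (min (F u) n) ≤ C := by
      intro n
      have hgn : Measurable (fun x => min (G x) (n : ℝ)) := hGmeas.min measurable_const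
      have hgnn : ∀ y, 0 ≤ min (G y) (n : ℝ) := fun y => le_min (hGnn y) n.cast_nonneg
      have hocc' := hocc t ht _ hgn hgnn
      have hint : Integrable (fun u => min (F u) (n : ℝ)) (volume.restrict (Ioc 0 t)) := by
        apply Integrable.mono' (g := fun _ => (n : ℝ))
          (integrableOn_const measure_Ioc_lt_top.ne)
          ((hFmeas.min measurable_const).aestronglyMeasurable)
        refine ae_of_all _ fun u => ?_
        rw [Real.norm_eq_abs, abs_of_nonneg (le_min (hGnn _) n.cast_nonneg)]
        exact min_le_right _ _
      calc ∫⁻ u in Ioc (0:ℝ) t, ENNReal.ofReal (min (F u) n)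
          = ENNReal.ofReal (∫ u in Ioc (0:ℝ) t, min (F u) n) :=
            (ofReal_integral_eq_lintegral_ofReal hint
              (ae_of_all _ fun u => le_min (hGnn _) n.cast_nonneg)).symm
        _ = ENNReal.ofReal (∫ x, min (G x) n * ℓ x t) := by
            rw [← intervalIntegral.integral_of_le ht]
            exact congrArg _ hocc'
        _ ≤ ∫⁻ x, ENNReal.ofReal (min (G x) n * ℓ x t) := by
            have hnn2 : (0 : ℝ → ℝ) ≤ᵐ[volume] fun x => min (G x) n * ℓ x t :=
              ae_of_all _ fun x => mul_nonneg (le_min (hGnn _) n.cast_nonneg) (hB x).1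
            rw [integral_eq_lintegral_of_nonneg_ae hnn2
              ((hgn.mul hBmeas).aestronglyMeasurable)]
            exact ENNReal.ofReal_toReal_le
        _ ≤ ∫⁻ x, ENNReal.ofReal (G x * ℓ x t) :=
            lintegral_mono fun x => ENNReal.ofReal_le_ofReal
              (mul_le_mul_of_nonneg_right (min_le_left _ _) (hB x).1)
        _ ≤ C := hGLbound
    calc ∫⁻ u in Ioc (0:ℝ) t, ENNReal.ofReal (F u)
        = ∫⁻ u in Ioc (0:ℝ) t, ⨆ n : ℕ, ENNReal.ofReal (min (F u) n) :=
          lintegral_congr hsup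
      _ = ⨆ n : ℕ, ∫⁻ u in Ioc (0:ℝ) t, ENNReal.ofReal (min (F u) n) := by
          apply lintegral_iSup
          · exact fun n => ENNReal.measurable_ofReal.comp (hFmeas.min measurable_const)
          · intro m n hmn u
            exact ENNReal.ofReal_le_ofReal (min_le_min le_rfl (Nat.cast_le.mpr hmn))
      _ ≤ C := iSup_le hstep
  rw [intervalIntegrable_iff, uIoc_of_le ht]
  constructor
  · exact (hFmeas.aestronglyMeasurable).restrict
  · rw [hasFiniteIntegral_iff_norm]
    refine lt_of_le_of_lt ?_ hCfin
    refine le_trans (le_of_eq (lintegral_congr fun u => ?_)) key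
    rw [Real.norm_eq_abs, abs_of_nonneg (hGnn _)]

end
section
variable (s : ℝ → ℝ) (hsC1 : ContDiff ℝ 1 s) (hsmono : StrictMono s)
  (hsurj : Function.Surjective s) (hs' : ∀ x, 0 < deriv s x)
  (sInv : ℝ → ℝ) (hLinv : Function.LeftInverse sInv s)
  (hRinv : Function.RightInverse sInv s)
  (σ : ℝ → ℝ) (hσ : Continuous σ) (hσpos : ∀ x, 0 < σ x)
  (ψ : ℝ → ℝ) (hψ : ∀ w, ψ w = deriv s (sInv w) * σ (sInv w))
  (κ : ℝ) (hκ : 0 < κ)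
  (μ : Measure ℝ)
  (hμ : μ = volume.withDensity
      (fun x => ENNReal.ofReal (κ * ((σ x) ^ 2 * deriv s x)⁻¹)))
  (w : ℝ → ℝ) (hw : Continuous w)
  (ℓ : ℝ → ℝ → ℝ) (hcont : Continuous fun p : ℝ × ℝ => ℓ p.1 p.2)
  (hocc : ∀ t, 0 ≤ t → ∀ φ : ℝ → ℝ, Measurable φ → (∀ y, 0 ≤ φ y) →
      ∫ u in (0:ℝ)..t, φ (w u) = ∫ x, φ x * ℓ x t)

set_option linter.unusedSectionVars false

include hsC1 hσ hσpos hs' hκ hμ in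
lemma integral_density (g : ℝ → ℝ) :
    ∫ v, g v ∂μ = ∫ v, (κ * ((σ v) ^ 2 * deriv s v)⁻¹) * g v := by
  have hderivCont : Continuous (deriv s) := hsC1.continuous_deriv le_rfl
  have hnn : ∀ v, 0 ≤ κ * ((σ v) ^ 2 * deriv s v)⁻¹ := fun v =>
    (mul_pos hκ (inv_pos.mpr (mul_pos (pow_pos (hσpos v) 2) (hs' v)))).le
  have hfmeas : Measurable fun v => Real.toNNReal (κ * ((σ v) ^ 2 * deriv s v)⁻¹) :=
    measurable_real_toNNReal.comp
      (continuous_const.mul (((hσ.pow 2).mul hderivCont).inv₀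
        (fun x => (mul_pos (pow_pos (hσpos x) 2) (hs' x)).ne'))).measurable
  have hid : μ = volume.withDensity
      (fun v => ((Real.toNNReal (κ * ((σ v) ^ 2 * deriv s v)⁻¹) : ℝ≥0) : ℝ≥0∞)) := hμ
  rw [hid, integral_withDensity_eq_integral_smul hfmeas]
  congr 1
  funext v
  rw [NNReal.smul_def, smul_eq_mul, Real.coe_toNNReal _ (hnn v)]

include hsC1 hcont in
lemma integrable_mul_ell
    (φ' : ℝ → ℝ) (hφ'm : Measurable φ') (hφ'Int : Integrable φ' μ)
    (c : ℝ) (t : ℝ) (B : ℝ) (hB : ∀ x, 0 ≤ ℓ x t ∧ ℓ x t ≤ B) :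
    Integrable (fun v => φ' v * ℓ (c * s v) t) μ := by
  have hslc : Continuous fun v => ℓ (c * s v) t :=
    hcont.comp ((continuous_const.mul hsC1.continuous).prodMk continuous_const)
  apply Integrable.mono' (hφ'Int.abs.mul_const B)
    ((hφ'm.mul hslc.measurable).aestronglyMeasurable)
  refine ae_of_all _ fun v => ?_
  rw [Real.norm_eq_abs, Pi.mul_apply, abs_mul]
  apply mul_le_mul_of_nonneg_left _ (abs_nonneg _)
  rw [abs_of_nonneg (hB _).1]
  exact (hB _).2

include hsC1 hsmono hsurj hs' hLinv hRinv hσ hσpos hψ hκ hμ hw hcont hocc in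
lemma identity_signed
    (φ' : ℝ → ℝ) (hφ'm : Measurable φ') (hφ'Int : Integrable φ' μ)
    (c : ℝ) (hc : 0 < c) (t : ℝ) (ht : 0 ≤ t)
    (B : ℝ) (hB0 : 0 ≤ B) (hB : ∀ x, 0 ≤ ℓ x t ∧ ℓ x t ≤ B) :
    κ * c⁻¹ * ∫ u in (0:ℝ)..t, φ' (sInv (w u / c)) / (ψ (w u / c)) ^ 2
      = ∫ v, φ' v * ℓ (c * s v) t ∂μ := by
  have hBmeas : Measurable fun x => ℓ x t :=
    (hcont.comp (continuous_id.prodMk continuous_const)).measurable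
  set φp : ℝ → ℝ := fun v => max (φ' v) 0 with hφp
  set φm : ℝ → ℝ := fun v => max (-φ' v) 0 with hφm
  have hφpm : Measurable φp := hφ'm.max measurable_const
  have hφmm : Measurable φm := hφ'm.neg.max measurable_const
  have hφpnn : ∀ v, 0 ≤ φp v := fun v => le_max_right _ _
  have hφmnn : ∀ v, 0 ≤ φm v := fun v => le_max_right _ _
  have hφpInt : Integrable φp μ := hφ'Int.pos_part
  have hφmInt : Integrable φm μ := hφ'Int.neg_part
  have iip := intervalIntegrable_nonneg s hsC1 hsmono hsurj hs' sInv hLinv hRinv σ hσ hσpos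
    ψ hψ κ hκ μ hμ w hw ℓ hocc φp hφpm hφpnn hφpInt c hc t ht B hB0 hBmeas hB
  have iim := intervalIntegrable_nonneg s hsC1 hsmono hsurj hs' sInv hLinv hRinv σ hσ hσpos
    ψ hψ κ hκ μ hμ w hw ℓ hocc φm hφmm hφmnn hφmInt c hc t ht B hB0 hBmeas hB
  have idp := identity_nonneg s hsC1 hsmono hsurj hs' sInv hLinv hRinv σ hσ hσpos
    ψ hψ κ hκ μ hμ w ℓ hocc φp hφpm hφpnn c hc t ht
  have idm := identity_nonneg s hsC1 hsmono hsurj hs' sInv hLinv hRinv σ hσ hσpos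
    ψ hψ κ hκ μ hμ w ℓ hocc φm hφmm hφmnn c hc t ht
  have hsplitfun : (fun u => φ' (sInv (w u / c)) / (ψ (w u / c)) ^ 2)
      = fun u => φp (sInv (w u / c)) / (ψ (w u / c)) ^ 2
        - φm (sInv (w u / c)) / (ψ (w u / c)) ^ 2 := by
    funext u
    rw [← sub_div, hφp, hφm]
    simp only [max_zero_sub_max_neg_zero_eq_self]
  rw [hsplitfun, intervalIntegral.integral_sub iip iim, mul_sub, idp, idm]
  rw [← integral_density s hsC1 hs' σ hσ hσpos κ hκ μ hμ,
    ← integral_density s hsC1 hs' σ hσ hσpos κ hκ μ hμ]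
  rw [← integral_sub
    (integrable_mul_ell s hsC1 μ ℓ hcont φp hφpm hφpInt c t B hB)
    (integrable_mul_ell s hsC1 μ ℓ hcont φm hφmm hφmInt c t B hB)]
  congr 1
  funext v
  rw [← sub_mul, hφp, hφm]
  simp only [max_zero_sub_max_neg_zero_eq_self]

include hsC1 hsmono hsurj hs' hLinv hRinv hw hocc in
lemma interval_congr_null
    (φ φ' : ℝ → ℝ) (hae : φ =ᵐ[volume] φ')
    (c : ℝ) (hc : 0 < c) (t : ℝ) (ht : 0 ≤ t) :
    ∫ u in (0:ℝ)..t, φ (sInv (w u / c)) / (ψ (w u / c)) ^ 2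
      = ∫ u in (0:ℝ)..t, φ' (sInv (w u / c)) / (ψ (w u / c)) ^ 2 := by
  have hsInvCont : Continuous sInv := sInv_cont s sInv hsmono hsurj hRinv
  have h0 : volume {x | ¬ φ x = φ' x} = 0 := ae_iff.mp hae
  obtain ⟨N, hNsub, hNmeas, hN0⟩ := exists_measurable_superset_of_null h0
  set M : Set ℝ := (fun x => sInv (x / c)) ⁻¹' N with hM
  have hMmeas : MeasurableSet M :=
    (hsInvCont.comp (continuous_id.div_const c)).measurable hNmeas
  set χ : ℝ → ℝ := M.indicator (fun _ => (1:ℝ)) with hχ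
  have hχmeas : Measurable χ := measurable_const.indicator hMmeas
  have hχnn : ∀ y, 0 ≤ χ y := fun y => Set.indicator_nonneg (fun _ _ => zero_le_one) y
  have hocc' := hocc t ht χ hχmeas hχnn
  have hRHS : ∫ x, χ x * ℓ x t = 0 := by
    rw [cov s hsC1 hsmono hsurj hs' c hc (fun x => χ x * ℓ x t)]
    apply integral_eq_zero_of_ae
    have hNc : ∀ᵐ v ∂(volume : Measure ℝ), v ∉ N := by
      rw [ae_iff]
      simpa using hN0
    filter_upwards [hNc] with v hv
    have hnm : c * s v ∉ M := by
      simp only [hM, Set.mem_preimage]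
      rw [mul_div_cancel_left₀ _ hc.ne', hLinv v]
      exact hv
    simp [hχ, Set.indicator_of_notMem hnm]
  have hLHS0 : ∫ u in Ioc (0:ℝ) t, χ (w u) = 0 := by
    rw [← intervalIntegral.integral_of_le ht, hocc', hRHS]
  have hχint : Integrable (fun u => χ (w u)) (volume.restrict (Ioc 0 t)) := by
    apply Integrable.mono' (g := fun _ => (1:ℝ))
      (integrableOn_const measure_Ioc_lt_top.ne)
      ((hχmeas.comp hw.measurable).aestronglyMeasurable)
    refine ae_of_all _ fun u => ?_
    simp only [Function.comp_apply]
    rw [Real.norm_eq_abs, abs_of_nonneg (hχnn _)]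
    by_cases h : w u ∈ M
    · simp [hχ, Set.indicator_of_mem h]
    · simp [hχ, Set.indicator_of_notMem h]
  have hzero : (fun u => χ (w u)) =ᵐ[volume.restrict (Ioc (0:ℝ) t)] 0 :=
    (integral_eq_zero_iff_of_nonneg_ae (ae_of_all _ fun u => hχnn (w u)) hχint).mp hLHS0
  have hae2 : ∀ᵐ u ∂(volume : Measure ℝ), u ∈ Ioc (0:ℝ) t → χ (w u) = 0 :=
    (ae_restrict_iff' measurableSet_Ioc).mp hzero
  apply intervalIntegral.integral_congr_ae
  simp only [Set.uIoc_of_le ht]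
  filter_upwards [hae2] with u hu hmem
  have h3 : χ (w u) = 0 := hu hmem
  have hnot : w u ∉ M := by
    intro hmm
    rw [hχ, Set.indicator_of_mem hmm] at h3
    exact one_ne_zero h3
  have hnN : sInv (w u / c) ∉ N := hnot
  have heq : φ (sInv (w u / c)) = φ' (sInv (w u / c)) := by
    by_contra hne
    exact hnN (hNsub hne)
  rw [heq]
end
lemma limit_part (s : ℝ → ℝ) (hscont : Continuous s)
    (μ : Measure ℝ) [IsFiniteMeasure μ]
    (ℓ : ℝ → ℝ → ℝ) (hcont : Continuous fun p : ℝ × ℝ => ℓ p.1 p.2)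
    (T : ℝ) (hT : 0 < T) (B : ℝ)
    (hB : ∀ x t, t ∈ Icc 0 T → 0 ≤ ℓ x t ∧ ℓ x t ≤ B)
    (a : ℝ → ℝ) (ha : Tendsto a (nhdsWithin 0 (Set.Ioi 0)) (nhds 0))
    (φ' : ℝ → ℝ) (hφ'm : Measurable φ') (hφ'Int : Integrable φ' μ) :
    TendstoUniformlyOn (fun ε t => ∫ v, φ' v * ℓ (a ε * s v) t ∂μ)
      (fun t => (∫ v, φ' v ∂μ) * ℓ 0 t) (nhdsWithin 0 (Set.Ioi 0)) (Icc 0 T) := by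
  have hB0 : 0 ≤ B := le_trans (hB 0 0 ⟨le_rfl, hT.le⟩).1 (hB 0 0 ⟨le_rfl, hT.le⟩).2
  haveI : CompactSpace (Icc (0:ℝ) T) := isCompact_iff_compactSpace.mp isCompact_Icc
  set Φ : C(ℝ, C(Icc (0:ℝ) T, ℝ)) :=
    ContinuousMap.curry ⟨fun p : ℝ × Icc (0:ℝ) T => ℓ p.1 p.2,
      hcont.comp (continuous_fst.prodMk (continuous_subtype_val.comp continuous_snd))⟩
    with hΦ
  set D : ℝ → ℝ := fun x => dist (Φ x) (Φ 0) with hD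
  have hDcont : Continuous D := (map_continuous Φ).dist continuous_const
  have hD0 : D 0 = 0 := dist_self _
  have hDnn : ∀ x, 0 ≤ D x := fun _ => dist_nonneg
  have hDle : ∀ x t, ∀ ht : t ∈ Icc (0:ℝ) T, |ℓ x t - ℓ 0 t| ≤ D x := by
    intro x t ht
    have h := ContinuousMap.dist_apply_le_dist (f := Φ x) (g := Φ 0) ⟨t, ht⟩
    simpa [hΦ, Real.dist_eq] using h
  have hΦnorm : ∀ x, ‖Φ x‖ ≤ B := by
    intro x
    rw [ContinuousMap.norm_le _ hB0]
    intro t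
    rw [show (Φ x) t = ℓ x (t : ℝ) from rfl, Real.norm_eq_abs, abs_of_nonneg (hB x t t.2).1]
    exact (hB x t t.2).2
  have hD2B : ∀ x, D x ≤ 2 * B := fun x =>
    le_trans (dist_le_norm_add_norm _ _) (by linarith [hΦnorm x, hΦnorm 0])
  have hIntF : ∀ c t, t ∈ Icc (0:ℝ) T → Integrable (fun v => φ' v * ℓ (c * s v) t) μ := by
    intro c t ht
    have hslc : Continuous fun v => ℓ (c * s v) t :=
      hcont.comp ((continuous_const.mul hscont).prodMk continuous_const)
    apply Integrable.mono' (hφ'Int.abs.mul_const B)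
      ((hφ'm.mul hslc.measurable).aestronglyMeasurable)
    refine ae_of_all _ fun v => ?_
    rw [Real.norm_eq_abs, Pi.mul_apply, abs_mul]
    apply mul_le_mul_of_nonneg_left _ (abs_nonneg _)
    rw [abs_of_nonneg (hB _ t ht).1]
    exact (hB _ t ht).2
  have hIntD : ∀ c, Integrable (fun v => |φ' v| * D (c * s v)) μ := by
    intro c
    apply Integrable.mono' (hφ'Int.abs.mul_const (2 * B))
      ((hφ'm.abs.mul ((hDcont.comp (continuous_const.mul hscont)).measurable)).aestronglyMeasurable)
    refine ae_of_all _ fun v => ?_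
    simp only [Function.comp_apply, Pi.mul_apply]
    rw [Real.norm_eq_abs, abs_of_nonneg (mul_nonneg (abs_nonneg (φ' v)) (hDnn (c * s v)))]
    exact mul_le_mul_of_nonneg_left (hD2B _) (abs_nonneg _)
  have hkey : ∀ c t, ∀ ht : t ∈ Icc (0:ℝ) T,
      dist ((∫ v, φ' v ∂μ) * ℓ 0 t) (∫ v, φ' v * ℓ (c * s v) t ∂μ)
        ≤ ∫ v, |φ' v| * D (c * s v) ∂μ := by
    intro c t ht
    have h1 : (∫ v, φ' v ∂μ) * ℓ 0 t = ∫ v, φ' v * ℓ 0 t ∂μ := (integral_mul_const _ _).symm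
    rw [Real.dist_eq, h1, ← integral_sub (hφ'Int.mul_const _) (hIntF c t ht)]
    calc |∫ v, (φ' v * ℓ 0 t - φ' v * ℓ (c * s v) t) ∂μ|
        ≤ ∫ v, |φ' v * ℓ 0 t - φ' v * ℓ (c * s v) t| ∂μ := by
          rw [← Real.norm_eq_abs]
          refine le_trans (norm_integral_le_integral_norm _) (le_of_eq ?_)
          simp [Real.norm_eq_abs]
      _ ≤ ∫ v, |φ' v| * D (c * s v) ∂μ := by
          apply integral_mono ((hφ'Int.mul_const _).sub (hIntF c t ht)).abs (hIntD c)
          intro v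
          simp only [Pi.abs_apply, Pi.sub_apply]
          have h2 : φ' v * ℓ 0 t - φ' v * ℓ (c * s v) t = φ' v * (ℓ 0 t - ℓ (c * s v) t) := by
            ring
          rw [h2, abs_mul]
          apply mul_le_mul_of_nonneg_left _ (abs_nonneg _)
          rw [abs_sub_comm]
          exact hDle (c * s v) t ht
  have htend : Tendsto (fun ε => ∫ v, |φ' v| * D (a ε * s v) ∂μ)
      (nhdsWithin 0 (Set.Ioi 0)) (nhds 0) := by
    have hmain : Tendsto (fun ε => ∫ v, |φ' v| * D (a ε * s v) ∂μ)
        (nhdsWithin 0 (Set.Ioi 0)) (nhds (∫ (_ : ℝ), (0:ℝ) ∂μ)) := by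
      apply tendsto_integral_filter_of_dominated_convergence (bound := fun v => |φ' v| * (2 * B))
      · refine Filter.Eventually.of_forall fun ε =>
          (hφ'm.abs.mul
            ((hDcont.comp (continuous_const.mul hscont)).measurable)).aestronglyMeasurable
      · refine Filter.Eventually.of_forall fun ε => ae_of_all _ fun v => ?_
        rw [Real.norm_eq_abs, abs_of_nonneg (mul_nonneg (abs_nonneg (φ' v)) (hDnn (a ε * s v)))]
        exact mul_le_mul_of_nonneg_left (hD2B _) (abs_nonneg _)
      · exact hφ'Int.abs.mul_const _
      · refine ae_of_all _ fun v => ?_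
        have hcv : Tendsto (fun c : ℝ => |φ' v| * D (c * s v)) (nhds 0)
            (nhds (|φ' v| * D (0 * s v))) :=
          ((continuous_const.mul (hDcont.comp
            ((continuous_id.mul continuous_const)))).tendsto 0)
        have hcomp := hcv.comp ha
        simp only [Function.comp_def, zero_mul, hD0, mul_zero] at hcomp
        exact hcomp
    simpa using hmain
  rw [Metric.tendstoUniformlyOn_iff]
  intro δ hδ
  have hev : ∀ᶠ ε in nhdsWithin 0 (Set.Ioi 0),
      (∫ v, |φ' v| * D (a ε * s v) ∂μ) < δ :=
    htend.eventually (Filter.Tendsto.eventually_lt_const hδ tendsto_id)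
  filter_upwards [hev] with ε hε t ht
  exact lt_of_le_of_lt (hkey (a ε) t ht) hε

/-- Convergence of rescaled additive functionals towards the local time at 0:
for every `φ ∈ L¹(μ)`, a.s., for all `T > 0`,
`sup_{t∈[0,T]} |κ a_ε^{-1} ∫₀ᵗ φ(𝔰⁻¹(W_s/a_ε))/ψ²(W_s/a_ε) ds − μ(φ) L_t^0| → 0`. -/
theorem additive_functional_to_local_time
    {Ω : Type*} [MeasurableSpace Ω] (P : Measure Ω) [IsProbabilityMeasure P]
    (W : ℝ → Ω → ℝ) (hW : IsBrownianMotion P W)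
    (L : ℝ → ℝ → Ω → ℝ) (hL : IsLocalTimeFamily P W L)
    (s : ℝ → ℝ) (hsC1 : ContDiff ℝ 1 s) (hsmono : StrictMono s)
    (hsbij : Function.Bijective s) (hs0 : s 0 = 0)
    (hs' : ∀ x, 0 < deriv s x)
    (sInv : ℝ → ℝ) (hsInv : Function.LeftInverse sInv s ∧
      Function.RightInverse sInv s)
    (σ : ℝ → ℝ) (hσ : Continuous σ) (hσpos : ∀ x, 0 < σ x)
    (ψ : ℝ → ℝ) (hψ : ∀ w, ψ w = deriv s (sInv w) * σ (sInv w))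
    (κ : ℝ) (hκ : 0 < κ)
    (μ : Measure ℝ)
    (hμ : μ = volume.withDensity
      (fun x => ENNReal.ofReal (κ * ((σ x) ^ 2 * deriv s x)⁻¹)))
    (hμprob : IsProbabilityMeasure μ)
    (a : ℝ → ℝ) (hapos : ∀ ε, 0 < ε → 0 < a ε)
    (ha : Tendsto a (nhdsWithin 0 (Set.Ioi 0)) (nhds 0))
    (φ : ℝ → ℝ) (hφint : Integrable φ μ) :
    ∀ᵐ ω ∂P, ∀ T : ℝ, 0 < T →
      TendstoUniformlyOn
        (fun ε t => κ * (a ε)⁻¹ *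
          ∫ u in (0:ℝ)..t, φ (sInv (W u ω / a ε)) / (ψ (W u ω / a ε)) ^ 2)
        (fun t => (∫ x, φ x ∂μ) * L 0 t ω)
        (nhdsWithin 0 (Set.Ioi 0)) (Set.Icc 0 T) := by
  haveI : IsProbabilityMeasure μ := hμprob
  obtain ⟨hWmeas, hW0, hWcont, hWgauss, hWind⟩ := hW
  obtain ⟨hLmeas, hLae⟩ := hL
  filter_upwards [hWcont, hLae] with ω hwc hLω
  obtain ⟨hcont, hmono, h0, hocc⟩ := hLω
  intro T hT
  -- bound for the local time up to time T
  obtain ⟨B, hB0, hB⟩ := localtime_bound (fun u => W u ω) hwc (fun x t => L x t ω)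
    hcont hmono h0 hocc T hT.le
  -- measurable representative of φ
  have hderivCont : Continuous (deriv s) := hsC1.continuous_deriv le_rfl
  have hdensmeas : Measurable (fun x => ENNReal.ofReal (κ * ((σ x) ^ 2 * deriv s x)⁻¹)) := by
    apply ENNReal.measurable_ofReal.comp
    exact (continuous_const.mul (((hσ.pow 2).mul hderivCont).inv₀
      (fun x => (mul_pos (pow_pos (hσpos x) 2) (hs' x)).ne'))).measurable
  have hvolac : (volume : Measure ℝ) ≪ μ := by
    rw [hμ]
    apply withDensity_absolutelyContinuous' hdensmeas.aemeasurable
    refine ae_of_all _ fun x => ?_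
    exact (ENNReal.ofReal_pos.mpr
      (mul_pos hκ (inv_pos.mpr (mul_pos (pow_pos (hσpos x) 2) (hs' x))))).ne'
  have hφaem : AEMeasurable φ μ := hφint.aemeasurable
  set φ' : ℝ → ℝ := hφaem.mk φ with hφ'def
  have hφ'meas : Measurable φ' := hφaem.measurable_mk
  have hφeqμ : φ =ᵐ[μ] φ' := hφaem.ae_eq_mk
  have hφeqvol : φ =ᵐ[volume] φ' := hvolac.ae_eq hφeqμ
  have hφ'int : Integrable φ' μ := hφint.congr hφeqμ
  have hIμ : ∫ x, φ x ∂μ = ∫ x, φ' x ∂μ := integral_congr_ae hφeqμ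
  have hlim := limit_part s hsC1.continuous μ (fun x t => L x t ω) hcont T hT B hB a ha
    φ' hφ'meas hφ'int
  rw [show (fun t => (∫ x, φ x ∂μ) * L 0 t ω) = fun t => (∫ v, φ' v ∂μ) * L 0 t ω from
    funext fun t => by rw [hIμ]]
  apply hlim.congr
  filter_upwards [eventually_mem_nhdsWithin] with ε hε
  intro t ht
  have hc : 0 < a ε := hapos ε hε
  have hid := identity_signed s hsC1 hsmono hsbij.2 hs' sInv hsInv.1 hsInv.2 σ hσ hσpos
    ψ hψ κ hκ μ hμ (fun u => W u ω) hwc (fun x t => L x t ω) hcont hocc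
    φ' hφ'meas hφ'int (a ε) hc t ht.1 B hB0 (fun x => hB x t ht)
  have hcn := interval_congr_null s hsC1 hsmono hsbij.2 hs' sInv hsInv.1 hsInv.2
    ψ (fun u => W u ω) hwc (fun x t => L x t ω) hocc φ φ' hφeqvol (a ε) hc t ht.1
  beta_reduce at hid hcn ⊢
  rw [← hid, hcn]
end

section
/- Let b, σ : ℝ → ℝ be continuous with σ > 0, 𝔰 the scale function, m = [σ²𝔰']^{-1} the speed density with κ^{-1} = ∫_ℝ m < ∞, and μ = κm·dx. Let f be continuous with μ(f) = 0, and define g(x) = 2∫₀ˣ 𝔰'(v)·(∫ᵥ^∞ f(u)[σ²(u)𝔰'(u)]^{-1}du)·dv (assuming the inner integral is finite for all v). Then g is C² and solves the Poisson-type equation 2b(x)g'(x) + σ²(x)g''(x) = −2f(x) for all x ∈ ℝ. Moreover, since μ(f) = 0, g admits the alternative representation g(x) = −2∫₀ˣ 𝔰'(v)·(∫_{−∞}^ᵛ f(u)[σ²(u)𝔰'(u)]^{-1}du)·dv. -/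
open Filter MeasureTheory Set intervalIntegral

/-- Solution of the Poisson equation: with `𝔰` the scale function,
`g(x) = 2∫₀ˣ 𝔰'(v)(∫ᵥ^∞ f(u)[σ²(u)𝔰'(u)]^{-1}du)dv` is `C²`, solves
`2bg' + σ²g'' = −2f`, and since `μ(f) = 0` it also equals
`−2∫₀ˣ 𝔰'(v)(∫_{−∞}^ᵛ f(u)[σ²(u)𝔰'(u)]^{-1}du)dv`. -/
theorem poisson_equation_solution
    (b σ : ℝ → ℝ) (hb : Continuous b) (hσ : Continuous σ)
    (hσpos : ∀ x, 0 < σ x)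
    (s : ℝ → ℝ)
    (hs : ∀ x, s x = ∫ v in (0 : ℝ)..x,
        Real.exp (-2 * ∫ u in (0 : ℝ)..v, b u / (σ u) ^ 2))
    (m : ℝ → ℝ) (hm : ∀ x, m x = ((σ x) ^ 2 * deriv s x)⁻¹)
    (hmint : Integrable m)
    (κ : ℝ) (hκ : κ = (∫ x, m x)⁻¹)
    (μ : Measure ℝ)
    (hμ : μ = volume.withDensity (fun x => ENNReal.ofReal (κ * m x)))
    (f : ℝ → ℝ) (hf : Continuous f)
    (hfint : Integrable f μ) (hfmean : ∫ x, f x ∂μ = 0)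
    (hinner : ∀ v : ℝ, IntegrableOn (fun u => f u * m u) (Set.Ioi v))
    (g : ℝ → ℝ)
    (hg : ∀ x, g x = 2 * ∫ v in (0 : ℝ)..x,
        deriv s v * ∫ u in Set.Ioi v, f u * m u) :
    ContDiff ℝ 2 g ∧
    (∀ x, 2 * b x * deriv g x + (σ x) ^ 2 * deriv (deriv g) x = -2 * f x) ∧
    (∀ x, g x = -2 * ∫ v in (0 : ℝ)..x,
        deriv s v * ∫ u in Set.Iio v, f u * m u) := by
  -- inner primitive I and the exponential E = deriv s
  set I : ℝ → ℝ := fun v => ∫ u in (0:ℝ)..v, b u / σ u ^ 2 with hI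
  have hbσ : Continuous (fun u => b u / σ u ^ 2) :=
    hb.div (hσ.pow 2) (fun x => pow_ne_zero 2 (hσpos x).ne')
  have hIderiv : ∀ x, HasDerivAt I (b x / σ x ^ 2) x := fun x =>
    intervalIntegral.integral_hasDerivAt_right (hbσ.intervalIntegrable _ _)
      (hbσ.stronglyMeasurableAtFilter _ _) hbσ.continuousAt
  set E : ℝ → ℝ := fun v => Real.exp (-2 * I v) with hE
  have hEderiv : ∀ x, HasDerivAt E (E x * (-2 * (b x / σ x ^ 2))) x := by
    intro x
    have h := (((hIderiv x).const_mul (-2)).exp)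
    simpa [hE, mul_comm] using h
  have hEdiff : Differentiable ℝ E := fun x => (hEderiv x).differentiableAt
  have hEcont : Continuous E := hEdiff.continuous
  have hEpos : ∀ x, 0 < E x := fun x => Real.exp_pos _
  have hsE : deriv s = E := by
    funext x
    have hs' : s = fun x => ∫ v in (0:ℝ)..x, E v := funext hs
    rw [hs']
    exact (intervalIntegral.integral_hasDerivAt_right (hEcont.intervalIntegrable _ _)
      (hEcont.stronglyMeasurableAtFilter _ _) hEcont.continuousAt).deriv
  have hmE : ∀ x, m x = (σ x ^ 2 * E x)⁻¹ := fun x => by rw [hm, hsE]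
  have hmcont : Continuous m := by
    have : Continuous fun x => (σ x ^ 2 * E x)⁻¹ := by
      apply Continuous.inv₀ ((hσ.pow 2).mul hEcont)
      intro x
      have := hσpos x
      have := hEpos x
      exact mul_ne_zero (pow_ne_zero 2 (hσpos x).ne') (hEpos x).ne'
    exact (funext hmE : m = _) ▸ this
  have hmpos : ∀ x, 0 < m x := fun x => by
    rw [hmE]
    have := hσpos x
    have := hEpos x
    positivity
  have hfm_cont : Continuous (fun u => f u * m u) := hf.mul hmcont
  -- the tail integral G
  set G : ℝ → ℝ := fun v => ∫ u in Set.Ioi v, f u * m u with hG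
  have hGsplit : ∀ a c : ℝ, a ≤ c → G a = (∫ u in a..c, f u * m u) + G c := by
    intro a c hac
    have hset : Set.Ioi a = Set.Ioc a c ∪ Set.Ioi c := (Set.Ioc_union_Ioi_eq_Ioi hac).symm
    rw [hG]
    simp only
    rw [hset, setIntegral_union (Set.Ioc_disjoint_Ioi le_rfl) measurableSet_Ioi
      ((hinner a).mono_set Set.Ioc_subset_Ioi_self) (hinner c),
      intervalIntegral.integral_of_le hac]
  have hGeq : ∀ v, G v = G 0 - ∫ u in (0:ℝ)..v, f u * m u := by
    intro v
    rcases le_total 0 v with h | h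
    · rw [hGsplit 0 v h]; ring
    · rw [hGsplit v 0 h, intervalIntegral.integral_symm]; ring
  have hGderiv : ∀ x, HasDerivAt G (-(f x * m x)) x := by
    intro x
    have h1 : HasDerivAt (fun v => ∫ u in (0:ℝ)..v, f u * m u) (f x * m x) x :=
      intervalIntegral.integral_hasDerivAt_right (hfm_cont.intervalIntegrable _ _)
        (hfm_cont.stronglyMeasurableAtFilter _ _) hfm_cont.continuousAt
    have h2 : G = fun v => G 0 - ∫ u in (0:ℝ)..v, f u * m u := funext hGeq
    rw [h2]
    have h3 := (hasDerivAt_const x (G 0)).sub h1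
    rw [zero_sub] at h3
    exact h3
  have hGdiff : Differentiable ℝ G := fun x => (hGderiv x).differentiableAt
  have hGcont : Continuous G := hGdiff.continuous
  have hgfun : g = fun x => 2 * ∫ v in (0:ℝ)..x, E v * G v := by
    funext x
    rw [hg]
    simp only [hsE, hG]
  have hEGcont : Continuous fun v => E v * G v := hEcont.mul hGcont
  have hg'deriv : ∀ x, HasDerivAt g (2 * (E x * G x)) x := by
    intro x
    rw [hgfun]
    exact (intervalIntegral.integral_hasDerivAt_right (hEGcont.intervalIntegrable _ _)
      (hEGcont.stronglyMeasurableAtFilter _ _) hEGcont.continuousAt).const_mul 2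
  have hderivg : deriv g = fun x => 2 * (E x * G x) := funext fun x => (hg'deriv x).deriv
  have hg''deriv : ∀ x, HasDerivAt (deriv g)
      (2 * (E x * (-2 * (b x / σ x ^ 2)) * G x + E x * -(f x * m x))) x := by
    intro x
    rw [hderivg]
    exact ((hEderiv x).mul (hGderiv x)).const_mul 2
  -- C² smoothness
  have hgC2 : ContDiff ℝ 2 g := by
    rw [show (2 : WithTop ℕ∞) = 1 + 1 from rfl, contDiff_succ_iff_deriv]
    refine ⟨fun x => (hg'deriv x).differentiableAt, by simp, ?_⟩
    rw [contDiff_one_iff_deriv]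
    refine ⟨fun x => (hg''deriv x).differentiableAt, ?_⟩
    have hd2 : deriv (deriv g) = fun x =>
        2 * (E x * (-2 * (b x / σ x ^ 2)) * G x + E x * -(f x * m x)) :=
      funext fun x => (hg''deriv x).deriv
    rw [hd2]
    have h1 : Continuous fun x => b x / σ x ^ 2 := hbσ
    fun_prop
  -- the ODE
  have hODE : ∀ x, 2 * b x * deriv g x + (σ x) ^ 2 * deriv (deriv g) x = -2 * f x := by
    intro x
    rw [(hg''deriv x).deriv]
    simp only [hderivg]
    rw [hmE x]
    have h1 : σ x ≠ 0 := (hσpos x).ne'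
    have h2 : E x ≠ 0 := (hEpos x).ne'
    field_simp
    ring
  -- total integral of f*m is zero
  have hfm_int : Integrable (fun x => f x * m x) := by
    have hmeas : Measurable fun x => ENNReal.ofReal (κ * m x) :=
      (measurable_const.mul hmcont.measurable).ennreal_ofReal
    have h0 := (integrable_withDensity_iff hmeas
      (Filter.Eventually.of_forall fun x => ENNReal.ofReal_lt_top)).mp (hμ ▸ hfint)
    have hintm_pos : 0 < ∫ x, m x := by
      rw [integral_pos_iff_support_of_nonneg (fun x => (hmpos x).le) hmint]
      have hs : Function.support m = Set.univ := Set.eq_univ_of_forall fun x => (hmpos x).ne'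
      rw [hs, Real.volume_univ]
      exact ENNReal.zero_lt_top
    have hκpos : 0 < κ := by rw [hκ]; exact inv_pos.mpr hintm_pos
    have h2 : (fun x => f x * (ENNReal.ofReal (κ * m x)).toReal)
        = fun x => κ * (f x * m x) := by
      funext x
      rw [ENNReal.toReal_ofReal (by have := hmpos x; positivity)]
      ring
    rw [h2] at h0
    have h3 := h0.const_mul κ⁻¹
    simpa [inv_mul_cancel_left₀ hκpos.ne'] using h3
  have hintm_pos : 0 < ∫ x, m x := by
    rw [integral_pos_iff_support_of_nonneg (fun x => (hmpos x).le) hmint]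
    have hsu : Function.support m = Set.univ := Set.eq_univ_of_forall fun x => (hmpos x).ne'
    rw [hsu, Real.volume_univ]
    exact ENNReal.zero_lt_top
  have hκpos : 0 < κ := by rw [hκ]; exact inv_pos.mpr hintm_pos
  have htot : ∫ x, f x * m x = 0 := by
    have hnn : Measurable fun x => (κ * m x).toNNReal :=
      (measurable_const.mul hmcont.measurable).real_toNNReal
    have hμf : ∫ x, f x ∂μ = ∫ x, κ * (m x * f x) := by
      rw [hμ]
      have hdens : (volume.withDensity fun x => ENNReal.ofReal (κ * m x))
          = volume.withDensity fun x => (((κ * m x).toNNReal : NNReal) : ENNReal) := rfl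
      rw [hdens, integral_withDensity_eq_integral_smul hnn f]
      refine integral_congr_ae (Filter.Eventually.of_forall fun x => ?_)
      have hnneg : 0 ≤ κ * m x := by have := hmpos x; positivity
      simp [NNReal.smul_def, Real.coe_toNNReal _ hnneg, mul_assoc]
    rw [hμf, MeasureTheory.integral_const_mul] at hfmean
    have h4 : ∫ x, m x * f x = 0 := by
      rcases mul_eq_zero.mp hfmean with h | h
      · exact absurd h hκpos.ne'
      · exact h
    calc ∫ x, f x * m x = ∫ x, m x * f x := by simp [mul_comm]
    _ = 0 := h4
  have hIoiIio : ∀ v, G v = -∫ u in Set.Iio v, f u * m u := by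
    intro v
    have h := integral_Iio_add_Ici (μ := volume) (b := v)
      hfm_int.integrableOn hfm_int.integrableOn
    rw [htot] at h
    have hIci : (∫ u in Set.Ici v, f u * m u) = G v := by
      rw [hG]; exact integral_Ici_eq_integral_Ioi
    rw [hIci] at h
    linarith
  refine ⟨hgC2, hODE, ?_⟩
  intro x
  rw [hgfun]
  simp only
  have hrhs : (∫ v in (0:ℝ)..x, deriv s v * ∫ u in Set.Iio v, f u * m u)
      = -∫ v in (0:ℝ)..x, E v * G v := by
    rw [← intervalIntegral.integral_neg]
    refine intervalIntegral.integral_congr fun v _ => ?_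
    rw [hsE]
    have h := hIoiIio v
    have : (∫ u in Set.Iio v, f u * m u) = -G v := by linarith
    rw [this]
    ring
  rw [hrhs]
  ring
end

section
/- In the setting above (g defined via the scale function from f), suppose additionally that there exist α > 2, reals f₊, f₋, and a continuous slowly varying ℓ such that [σ(x)𝔰'(x)]^{-2}|𝔰(x)|^{2−1/α}ℓ(|𝔰(x)|)f(x) → f₊/f₋ as x → ±∞. Then g'·σ ∈ L²(μ), i.e. ∫_ℝ (g'(x)σ(x))² μ(dx) < ∞. -/
open Filter MeasureTheory Set intervalIntegral
open scoped NNReal ENNReal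

/-- A function `l : [0,∞) → (0,∞)` is slowly varying if `l(λx)/l(x) → 1` as `x → ∞`
for every `λ > 0`. -/
def SlowlyVarying (l : ℝ → ℝ) : Prop :=
  ∀ lam : ℝ, 0 < lam → Tendsto (fun x => l (lam * x) / l x) atTop (nhds 1)

/-- Uniform convergence theorem for "slowly oscillating" continuous functions:
if `L(x+t) - L(x) → 0` for every fixed `t`, then the convergence is uniform
for `t ∈ [0,1]`.  Proof via a Steinhaus-type measure argument. -/
lemma uct_aux (L : ℝ → ℝ) (hLc : Continuous L)
    (hL : ∀ t : ℝ, Tendsto (fun x => L (x + t) - L x) atTop (nhds 0))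
    {ε : ℝ} (hε : 0 < ε) :
    ∃ N : ℝ, ∀ t ∈ Icc (0:ℝ) 1, ∀ x, N ≤ x → |L (x + t) - L x| ≤ ε := by
  set E : ℕ → Set ℝ := fun n =>
    Icc (0:ℝ) 2 ∩ ⋂ (x : ℝ), ⋂ (_ : (n:ℝ) ≤ x), {t | |L (x + t) - L x| ≤ ε/2} with hE
  have hmemE : ∀ n t, t ∈ E n ↔
      (t ∈ Icc (0:ℝ) 2 ∧ ∀ x : ℝ, (n:ℝ) ≤ x → |L (x + t) - L x| ≤ ε/2) := by
    intro n t
    simp only [hE, mem_inter_iff, mem_iInter, mem_setOf_eq]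
  have hclosed : ∀ n, IsClosed (E n) := by
    intro n
    refine isClosed_Icc.inter (isClosed_iInter fun x => isClosed_iInter fun _ => ?_)
    exact isClosed_le (((hLc.comp (continuous_add_left x)).sub continuous_const).abs)
      continuous_const
  have hmeasE : ∀ n, MeasurableSet (E n) := fun n => (hclosed n).measurableSet
  have hmono : Monotone E := by
    intro n k hnk t ht
    rw [hmemE] at ht ⊢
    exact ⟨ht.1, fun x hx => ht.2 x (le_trans (by exact_mod_cast hnk) hx)⟩
  have hunion : ⋃ n, E n = Icc (0:ℝ) 2 := by
    apply Subset.antisymm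
    · exact iUnion_subset fun n => inter_subset_left
    · intro t ht
      have h1 : ∀ᶠ x in atTop, |L (x + t) - L x| ≤ ε/2 := by
        have h2 := (hL t).abs
        rw [abs_zero] at h2
        exact h2.eventually_le_const (by linarith)
      obtain ⟨N0, hN0⟩ := eventually_atTop.mp h1
      refine mem_iUnion.mpr ⟨⌈N0⌉₊, (hmemE _ _).mpr ⟨ht, fun x hx => hN0 x ?_⟩⟩
      exact le_trans (Nat.le_ceil N0) hx
  have htend : Tendsto (fun n => volume (E n)) atTop (nhds (volume (Icc (0:ℝ) 2))) := by
    have := tendsto_measure_iUnion_atTop (μ := volume) hmono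
    rwa [hunion] at this
  have h32 : ENNReal.ofReal (3/2) < volume (Icc (0:ℝ) 2) := by
    rw [Real.volume_Icc]
    exact (ENNReal.ofReal_lt_ofReal_iff (by norm_num)).mpr (by norm_num)
  obtain ⟨N, hN⟩ := (htend.eventually (lt_mem_nhds h32)).exists
  refine ⟨(N:ℝ) + 2, fun t ht x hx => ?_⟩
  -- Steinhaus-type argument: find p with p ∈ E N and p + t ∈ E N
  have hB : volume ((fun h => h + t) ⁻¹' E N) = volume (E N) :=
    measure_preimage_add_right volume t (E N)
  have hAB : (E N ∩ (fun h => h + t) ⁻¹' E N).Nonempty := by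
    by_contra hcon
    rw [not_nonempty_iff_eq_empty] at hcon
    have hdisj : Disjoint (E N) ((fun h => h + t) ⁻¹' E N) :=
      disjoint_iff_inter_eq_empty.mpr hcon
    have hsub : E N ∪ (fun h => h + t) ⁻¹' E N ⊆ Icc (-1:ℝ) 2 := by
      rintro p (hp | hp)
      · have h := ((hmemE N p).mp hp).1
        exact ⟨by linarith [h.1], h.2⟩
      · have h := ((hmemE N (p + t)).mp hp).1
        constructor
        · linarith [h.1, ht.2]
        · linarith [h.2, ht.1]
    have hle : volume (E N ∪ (fun h => h + t) ⁻¹' E N) ≤ ENNReal.ofReal 3 := by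
      refine le_trans (measure_mono hsub) ?_
      rw [Real.volume_Icc]
      norm_num
    have hmeasB : MeasurableSet ((fun h => h + t) ⁻¹' E N) :=
      (hmeasE N).preimage (measurable_add_const t)
    rw [measure_union hdisj hmeasB] at hle
    have hlt : ENNReal.ofReal 3 < volume (E N) + volume ((fun h => h + t) ⁻¹' E N) := by
      rw [hB]
      calc ENNReal.ofReal 3 = ENNReal.ofReal (3/2) + ENNReal.ofReal (3/2) := by
            rw [← ENNReal.ofReal_add (by norm_num) (by norm_num)]; norm_num
        _ < volume (E N) + volume (E N) := ENNReal.add_lt_add hN hN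
    exact absurd hle (not_le.mpr hlt)
  obtain ⟨p, hp1, hp2⟩ := hAB
  obtain ⟨hpIcc, hpP⟩ := (hmemE N p).mp hp1
  obtain ⟨hptIcc, hptP⟩ := (hmemE N (p + t)).mp hp2
  have hxp : (N:ℝ) ≤ x - p := by
    have := hpIcc.2; linarith
  have h1 := hptP (x - p) hxp
  have h2 := hpP (x - p) hxp
  have e1 : x - p + (p + t) = x + t := by ring
  have e2 : x - p + p = x := by ring
  rw [e1] at h1
  rw [e2] at h2
  calc |L (x + t) - L x|
      = |(L (x + t) - L (x - p)) - (L x - L (x - p))| := by ring_nf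
    _ ≤ |L (x + t) - L (x - p)| + |L x - L (x - p)| := abs_sub _ _
    _ ≤ ε/2 + ε/2 := add_le_add h1 h2
    _ = ε := by ring

/-- Karamata-type lower bound: a continuous positive slowly varying function
eventually dominates `y ^ (-δ)` for every `δ > 0`. -/
lemma slowvary_lower (l : ℝ → ℝ) (hlcont : ContinuousOn l (Set.Ici 0))
    (hlpos : ∀ x ∈ Set.Ici (0:ℝ), 0 < l x) (hlsv : SlowlyVarying l)
    {δ : ℝ} (hδ : 0 < δ) :
    ∃ Y : ℝ, 1 ≤ Y ∧ ∀ y, Y ≤ y → y ^ (-δ) ≤ l y := by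
  set L : ℝ → ℝ := fun u => Real.log (l (Real.exp u)) with hLdef
  have hlexp : ∀ u : ℝ, 0 < l (Real.exp u) := fun u => hlpos _ (Real.exp_pos u).le
  have hLc : Continuous L := by
    refine continuous_iff_continuousAt.mpr fun u => ?_
    have h1 : ContinuousAt l (Real.exp u) :=
      hlcont.continuousAt (mem_of_superset (Ioi_mem_nhds (Real.exp_pos u)) Ioi_subset_Ici_self)
    have h2 : ContinuousAt (fun u : ℝ => l (Real.exp u)) u :=
      h1.comp Real.continuous_exp.continuousAt
    exact h2.log (hlexp u).ne'
  have hL : ∀ t : ℝ, Tendsto (fun x => L (x + t) - L x) atTop (nhds 0) := by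
    intro t
    have h1 := hlsv (Real.exp t) (Real.exp_pos t)
    have h2 : Tendsto (fun x : ℝ => l (Real.exp t * Real.exp x) / l (Real.exp x))
        atTop (nhds 1) := h1.comp Real.tendsto_exp_atTop
    have h3 := (Real.continuousAt_log one_ne_zero).tendsto.comp h2
    rw [Real.log_one] at h3
    refine h3.congr fun x => ?_
    have hx : 0 < l (Real.exp x) := hlexp x
    have hxt : 0 < l (Real.exp t * Real.exp x) :=
      hlpos _ (mul_pos (Real.exp_pos t) (Real.exp_pos x)).le
    show Real.log (l (Real.exp t * Real.exp x) / l (Real.exp x)) = L (x + t) - L x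
    rw [Real.log_div hxt.ne' hx.ne']
    have he : Real.exp t * Real.exp x = Real.exp (x + t) := by
      rw [← Real.exp_add]; ring_nf
    rw [he]
  obtain ⟨N, hN⟩ := uct_aux L hLc hL (half_pos hδ)
  -- chaining: linear lower bound for L
  have chain : ∀ n : ℕ, ∀ x : ℝ, N + n ≤ x → x ≤ N + n + 1 →
      L N - δ/2 * (n + 1) ≤ L x := by
    intro n
    induction n with
    | zero =>
      intro x hx1 hx2
      push_cast at hx1 hx2
      have h1 := hN (x - N) ⟨by linarith, by linarith⟩ N le_rfl
      rw [show N + (x - N) = x by ring] at h1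
      have := abs_le.mp h1
      push_cast
      linarith [this.1]
    | succ n ih =>
      intro x hx1 hx2
      push_cast at hx1 hx2
      have h1 := ih (x - 1) (by push_cast; linarith) (by push_cast; linarith)
      have h2 := hN 1 ⟨zero_le_one, le_rfl⟩ (x - 1) (by linarith [Nat.cast_nonneg (α := ℝ) n])
      rw [show x - 1 + 1 = x by ring] at h2
      have h3 := abs_le.mp h2
      push_cast
      linarith [h3.1]
  have bound : ∀ x : ℝ, N ≤ x → L N - δ/2 * (x - N + 1) ≤ L x := by
    intro x hx
    set n := ⌊x - N⌋₊ with hn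
    have h1 : (n:ℝ) ≤ x - N := Nat.floor_le (by linarith)
    have h2 : x - N < n + 1 := Nat.lt_floor_add_one (x - N)
    have h3 := chain n x (by linarith) (by linarith)
    have h4 : δ/2 * ((n:ℝ) + 1) ≤ δ/2 * (x - N + 1) :=
      mul_le_mul_of_nonneg_left (by linarith) (by positivity)
    linarith
  set C1 : ℝ := δ/2 * (1 - N) - L N with hC1
  refine ⟨max 1 (Real.exp (max N (2 * C1 / δ))), le_max_left _ _, fun y hy => ?_⟩
  have hy1 : (1:ℝ) ≤ y := le_trans (le_max_left _ _) hy
  have hy0 : (0:ℝ) < y := by linarith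
  have hly : 0 < l y := hlpos y hy0.le
  set u := Real.log y with hu
  have hu1 : max N (2 * C1 / δ) ≤ u := by
    rw [hu, Real.le_log_iff_exp_le hy0]
    exact le_trans (le_max_right _ _) hy
  have huN : N ≤ u := le_trans (le_max_left _ _) hu1
  have huC : 2 * C1 / δ ≤ u := le_trans (le_max_right _ _) hu1
  have huC' : 2 * C1 ≤ u * δ := by
    rw [div_le_iff₀ hδ] at huC
    linarith
  have hLu := bound u huN
  have hkey : -δ * u ≤ L u := by
    rw [hC1] at huC'
    nlinarith [hLu]
  have hexpu : Real.exp u = y := Real.exp_log hy0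
  have hLy : L u = Real.log (l y) := by
    rw [hLdef]
    simp only
    rw [hexpu]
  rw [Real.rpow_def_of_pos hy0]
  calc Real.exp (Real.log y * -δ) ≤ Real.exp (L u) := by
        apply Real.exp_le_exp.mpr
        rw [hu] at hkey ⊢
        linarith [hkey]
    _ = l y := by rw [hLy, Real.exp_log hly]

/-- Main tail estimate: integrability of `e·T²` on a right half-line. -/
lemma tail_integrable (e s T F l : ℝ → ℝ) (α fp : ℝ) (hα : 2 < α)
    (hecont : Continuous e) (hepos : ∀ x, 0 < e x)
    (hsd : ∀ x, HasDerivAt s (e x) x)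
    (hFint : Integrable F) (hFcont : Continuous F)
    (hTdef : ∀ x, T x = ∫ u in Set.Ioi x, F u)
    (hTcont : Continuous T) (hT0 : Tendsto T atTop (nhds 0))
    (hlcont : ContinuousOn l (Set.Ici 0))
    (hlpos : ∀ x ∈ Set.Ici (0:ℝ), 0 < l x)
    (hlsv : SlowlyVarying l)
    (hasymp : Tendsto (fun x => (e x)⁻¹ * (|s x| ^ (2 - 1/α) * l |s x| * F x))
      atTop (nhds fp)) :
    ∃ R : ℝ, IntegrableOn (fun x => e x * T x ^ 2) (Set.Ici R) := by
  have hsmono : StrictMono s := by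
    apply strictMono_of_deriv_pos
    intro x
    rw [(hsd x).deriv]
    exact hepos x
  have hTbd1 : ∀ᶠ x in atTop, |T x| ≤ 1 := by
    have h2 := hT0.abs
    rw [abs_zero] at h2
    exact h2.eventually_le_const one_pos
  rcases tendsto_of_monotone hsmono.monotone with hstop | ⟨S, hS⟩
  · -- s → +∞ : use the asymptotic bound and Karamata
    have hαpos : (0:ℝ) < α := by linarith
    have h2α : 1/α < 1/2 := by
      rw [div_lt_div_iff₀ hαpos (by norm_num : (0:ℝ) < 2)]
      linarith
    set δ : ℝ := (1/2 - 1/α)/2 with hδdef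
    have hδpos : 0 < δ := by rw [hδdef]; linarith
    clear_value δ
    obtain ⟨Y, hY1, hYl⟩ := slowvary_lower l hlcont hlpos hlsv hδpos
    set γ : ℝ := 1/α - 2 + δ with hγdef
    have hγ1 : γ + 1 < -(1/2) := by
      rw [hγdef, hδdef]; linarith
    clear_value γ
    set C : ℝ := |fp| + 1 with hCdef
    have hCpos : 0 < C := by rw [hCdef]; positivity
    clear_value C
    have hCb : ∀ᶠ x in atTop, |(e x)⁻¹ * (|s x| ^ (2 - 1/α) * l |s x| * F x)| ≤ C := by
      have := hasymp.abs
      exact this.eventually_le_const (by rw [hCdef]; linarith)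
    have hsY : ∀ᶠ x in atTop, max Y 1 ≤ s x := hstop.eventually (eventually_ge_atTop _)
    obtain ⟨R, hR⟩ := eventually_atTop.mp (hCb.and hsY)
    have hsge : ∀ x, R ≤ x → (1 ≤ s x ∧ Y ≤ s x) := by
      intro x hx
      have := (hR x hx).2
      exact ⟨le_trans (le_max_right _ _) this, le_trans (le_max_left _ _) this⟩
    have hspos : ∀ x, R ≤ x → 0 < s x := fun x hx => lt_of_lt_of_le one_pos (hsge x hx).1
    -- pointwise bound on F
    have hFbd : ∀ x, R ≤ x → |F x| ≤ C * (e x * s x ^ γ) := by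
      intro x hx
      obtain ⟨hs1, hsY'⟩ := hsge x hx
      have hsx : 0 < s x := hspos x hx
      have habs : |s x| = s x := abs_of_pos hsx
      have hlx : 0 < l (s x) := hlpos _ hsx.le
      have hrp : (0:ℝ) < s x ^ (2 - 1/α) := Real.rpow_pos_of_pos hsx _
      have hA := (hR x hx).1
      rw [habs] at hA
      rw [abs_mul, abs_mul, abs_mul, abs_of_pos (inv_pos.mpr (hepos x)),
        abs_of_pos hrp, abs_of_pos hlx] at hA
      -- hA : (e x)⁻¹ * (s x ^ (2 - 1/α) * l (s x) * |F x|) ≤ C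
      have hApos : 0 < (e x)⁻¹ * (s x ^ (2 - 1/α) * l (s x)) :=
        mul_pos (inv_pos.mpr (hepos x)) (mul_pos hrp hlx)
      have hF1 : |F x| ≤ C / ((e x)⁻¹ * (s x ^ (2 - 1/α) * l (s x))) := by
        rw [le_div_iff₀ hApos]
        calc |F x| * ((e x)⁻¹ * (s x ^ (2 - 1/α) * l (s x)))
            = (e x)⁻¹ * (s x ^ (2 - 1/α) * l (s x) * |F x|) := by ring
          _ ≤ C := hA
      have hinvl : (l (s x))⁻¹ ≤ s x ^ δ := by
        have h1 : s x ^ (-δ) ≤ l (s x) := hYl (s x) hsY'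
        have h2 : (0:ℝ) < s x ^ (-δ) := Real.rpow_pos_of_pos hsx _
        have h3 := one_div_le_one_div_of_le h2 h1
        rw [one_div, one_div, ← Real.rpow_neg hsx.le, neg_neg] at h3
        exact h3
      have hAinv : s x ^ (1/α - 2) = (s x ^ (2 - 1/α))⁻¹ := by
        rw [show (1/α - 2 : ℝ) = -(2 - 1/α) by ring, Real.rpow_neg hsx.le]
      have heq : C / ((e x)⁻¹ * (s x ^ (2 - 1/α) * l (s x)))
          = C * e x * s x ^ (1/α - 2) * (l (s x))⁻¹ := by
        rw [hAinv]
        field_simp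
      rw [heq] at hF1
      calc |F x| ≤ C * e x * s x ^ (1/α - 2) * (l (s x))⁻¹ := hF1
        _ ≤ C * e x * s x ^ (1/α - 2) * s x ^ δ := by
            refine mul_le_mul_of_nonneg_left hinvl ?_
            exact mul_nonneg (mul_nonneg hCpos.le (hepos x).le) (Real.rpow_nonneg hsx.le _)
        _ = C * (e x * s x ^ γ) := by
            rw [hγdef, Real.rpow_add hsx]
            ring
    -- generic integral computation for exponents below -1
    have key : ∀ ν : ℝ, ν + 1 < 0 → ∀ x, R ≤ x →
        IntegrableOn (fun u => e u * s u ^ ν) (Set.Ioi x) ∧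
        ∫ u in Set.Ioi x, e u * s u ^ ν = s x ^ (ν + 1) / (-(ν + 1)) := by
      intro ν hν x hx
      have hsx : ∀ u, x ≤ u → 0 < s u := fun u hu => hspos u (le_trans hx hu)
      have hP : ∀ u ∈ Set.Ici x, HasDerivAt (fun w => s w ^ (ν + 1) / (ν + 1))
          (e u * s u ^ ν) u := by
        intro u hu
        have h0 : 0 < s u := hsx u hu
        have h1 := (hsd u).rpow_const (p := ν + 1) (Or.inl h0.ne')
        have h2 := h1.div_const (ν + 1)
        refine h2.congr_deriv ?_
        have hν0 : ν + 1 ≠ 0 := ne_of_lt hν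
        rw [show ν + 1 - 1 = ν by ring]
        field_simp
      have hlim : Tendsto (fun u => s u ^ (ν + 1) / (ν + 1)) atTop (nhds 0) := by
        have h1 : Tendsto (fun y : ℝ => y ^ (ν + 1)) atTop (nhds 0) := by
          have := tendsto_rpow_neg_atTop (y := -(ν + 1)) (by linarith)
          simpa using this
        have h2 := (h1.comp hstop).div_const (ν + 1)
        simpa using h2
      have hnonneg : ∀ u ∈ Set.Ioi x, 0 ≤ e u * s u ^ ν := by
        intro u hu
        exact mul_nonneg (hepos u).le (Real.rpow_nonneg (hsx u (le_of_lt hu)).le ν)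
      have hint := integrableOn_Ioi_deriv_of_nonneg' hP hnonneg hlim
      refine ⟨hint, ?_⟩
      have hval := integral_Ioi_of_hasDerivAt_of_tendsto' hP hint hlim
      rw [hval]
      simp only [zero_sub, div_neg]
    -- bound on T
    have hTbd : ∀ x, R ≤ x → |T x| ≤ C / (-(γ + 1)) * s x ^ (γ + 1) := by
      intro x hx
      obtain ⟨hint, hval⟩ := key γ (by linarith) x hx
      rw [hTdef x]
      have step1 : |∫ u in Set.Ioi x, F u| ≤ ∫ u in Set.Ioi x, |F u| := by
        have := norm_integral_le_integral_norm (μ := volume.restrict (Set.Ioi x)) F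
        simpa [Real.norm_eq_abs] using this
      have step2 : ∫ u in Set.Ioi x, |F u| ≤ ∫ u in Set.Ioi x, C * (e u * s u ^ γ) := by
        refine setIntegral_mono_on (hFint.abs.integrableOn) (hint.const_mul C)
          measurableSet_Ioi ?_
        intro u hu
        exact hFbd u (le_trans hx (le_of_lt hu))
      have step3 : ∫ u in Set.Ioi x, C * (e u * s u ^ γ)
          = C * (s x ^ (γ + 1) / (-(γ + 1))) := by
        rw [MeasureTheory.integral_const_mul, hval]
      calc |∫ u in Set.Ioi x, F u| ≤ ∫ u in Set.Ioi x, C * (e u * s u ^ γ) :=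
            le_trans step1 step2
        _ = C / (-(γ + 1)) * s x ^ (γ + 1) := by rw [step3]; ring
    set c1 : ℝ := C / (-(γ + 1)) with hc1def
    have hc1 : 0 ≤ c1 := by rw [hc1def]; exact div_nonneg hCpos.le (by linarith)
    clear_value c1
    refine ⟨R, ?_⟩
    rw [integrableOn_Ici_iff_integrableOn_Ioi]
    have hρint := (key (γ + 1 + (γ + 1)) (by linarith) R le_rfl).1
    refine Integrable.mono (hρint.const_mul (c1 ^ 2))
      ((hecont.mul (hTcont.pow 2)).aestronglyMeasurable.restrict) ?_
    rw [ae_restrict_iff' measurableSet_Ioi]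
    refine ae_of_all _ fun x hx => ?_
    have hx' : R ≤ x := le_of_lt hx
    have hsx : 0 < s x := hspos x hx'
    have h1 := hTbd x hx'
    have h2 : T x ^ 2 ≤ (c1 * s x ^ (γ + 1)) ^ 2 := by
      rw [← sq_abs (T x)]
      exact pow_le_pow_left₀ (abs_nonneg _) h1 2
    have h3 : (c1 * s x ^ (γ + 1)) ^ 2 = c1 ^ 2 * s x ^ (γ + 1 + (γ + 1)) := by
      rw [Real.rpow_add hsx (γ + 1) (γ + 1), mul_pow, pow_two (s x ^ (γ + 1))]
    rw [Real.norm_eq_abs, Real.norm_eq_abs]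
    have hnn1 : 0 ≤ e x * T x ^ 2 := mul_nonneg (hepos x).le (sq_nonneg _)
    have hnn2 : 0 ≤ c1 ^ 2 * (e x * s x ^ (γ + 1 + (γ + 1))) :=
      mul_nonneg (sq_nonneg c1)
        (mul_nonneg (hepos x).le (Real.rpow_nonneg hsx.le _))
    rw [abs_of_nonneg hnn1, abs_of_nonneg hnn2]
    calc e x * T x ^ 2 ≤ e x * (c1 * s x ^ (γ + 1)) ^ 2 :=
          mul_le_mul_of_nonneg_left h2 (hepos x).le
      _ = c1 ^ 2 * (e x * s x ^ (γ + 1 + (γ + 1))) := by rw [h3]; ring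
  · -- s bounded above : e is integrable at +∞
    have heint : IntegrableOn e (Set.Ioi 0) :=
      integrableOn_Ioi_deriv_of_nonneg' (fun x _ => hsd x) (fun x _ => (hepos x).le) hS
    obtain ⟨R0, hR0⟩ := eventually_atTop.mp hTbd1
    refine ⟨max R0 1, ?_⟩
    have hsub : Set.Ici (max R0 1) ⊆ Set.Ioi (0:ℝ) := fun x hx =>
      mem_Ioi.mpr (lt_of_lt_of_le one_pos (le_trans (le_max_right _ _) hx))
    have hint : IntegrableOn e (Set.Ici (max R0 1)) := heint.mono_set hsub
    refine Integrable.mono hint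
      ((hecont.mul (hTcont.pow 2)).aestronglyMeasurable.restrict) ?_
    rw [ae_restrict_iff' measurableSet_Ici]
    refine ae_of_all _ fun x hx => ?_
    have h1 : |T x| ≤ 1 := hR0 x (le_trans (le_max_left _ _) hx)
    rw [Real.norm_eq_abs, Real.norm_eq_abs,
      abs_of_nonneg (mul_nonneg (hepos x).le (sq_nonneg _)), abs_of_pos (hepos x)]
    have h2 : T x ^ 2 ≤ 1 := by
      rw [← sq_abs]
      nlinarith [abs_nonneg (T x)]
    nlinarith [hepos x]

/-- If `α > 2` in the stable asymptotic condition for `f`, then the function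
`g` solving the Poisson equation satisfies `g'·σ ∈ L²(μ)`. -/
theorem gprime_sigma_L2
    (b σ : ℝ → ℝ) (hb : Continuous b) (hσ : Continuous σ)
    (hσpos : ∀ x, 0 < σ x)
    (s : ℝ → ℝ)
    (hs : ∀ x, s x = ∫ v in (0 : ℝ)..x,
        Real.exp (-2 * ∫ u in (0 : ℝ)..v, b u / (σ u) ^ 2))
    (m : ℝ → ℝ) (hm : ∀ x, m x = ((σ x) ^ 2 * deriv s x)⁻¹)
    (hmint : Integrable m)
    (κ : ℝ) (hκ : κ = (∫ x, m x)⁻¹)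
    (μ : Measure ℝ)
    (hμ : μ = volume.withDensity (fun x => ENNReal.ofReal (κ * m x)))
    (f : ℝ → ℝ) (hf : Continuous f)
    (hfint : Integrable f μ) (hfmean : ∫ x, f x ∂μ = 0)
    (hinner : ∀ v : ℝ, IntegrableOn (fun u => f u * m u) (Set.Ioi v))
    (g : ℝ → ℝ)
    (hg : ∀ x, g x = 2 * ∫ v in (0 : ℝ)..x,
        deriv s v * ∫ u in Set.Ioi v, f u * m u)
    (α : ℝ) (hα : 2 < α) (fp fm : ℝ)
    (l : ℝ → ℝ) (hlcont : ContinuousOn l (Set.Ici 0))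
    (hlpos : ∀ x ∈ Set.Ici (0 : ℝ), 0 < l x) (hlsv : SlowlyVarying l)
    (hftop : Tendsto
      (fun x => ((σ x * deriv s x) ^ 2)⁻¹ * |s x| ^ (2 - 1 / α) * l |s x| * f x)
      atTop (nhds fp))
    (hfbot : Tendsto
      (fun x => ((σ x * deriv s x) ^ 2)⁻¹ * |s x| ^ (2 - 1 / α) * l |s x| * f x)
      atBot (nhds fm)) :
    Integrable (fun x => (deriv g x * σ x) ^ 2) μ := by
  classical
  have hσne : ∀ x, σ x ≠ 0 := fun x => (hσpos x).ne'
  have hq : Continuous fun u => b u / σ u ^ 2 :=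
    hb.div (hσ.pow 2) fun x => pow_ne_zero 2 (hσne x)
  set e : ℝ → ℝ := fun v => Real.exp (-2 * ∫ u in (0:ℝ)..v, b u / σ u ^ 2) with he
  have hIcont : Continuous fun v => ∫ u in (0:ℝ)..v, b u / σ u ^ 2 :=
    continuous_iff_continuousAt.mpr fun v =>
      ((hq.integral_hasStrictDerivAt 0 v).hasDerivAt).continuousAt
  have hecont : Continuous e := Real.continuous_exp.comp (continuous_const.mul hIcont)
  have hepos : ∀ v, 0 < e v := fun v => Real.exp_pos _
  have hene : ∀ v, e v ≠ 0 := fun v => (hepos v).ne'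
  have hsd : ∀ x, HasDerivAt s (e x) x := by
    intro x
    have h1 : HasDerivAt (fun y => ∫ v in (0:ℝ)..y, e v) (e x) x :=
      (hecont.integral_hasStrictDerivAt 0 x).hasDerivAt
    have hseq : s = fun y => ∫ v in (0:ℝ)..y, e v := funext hs
    rw [hseq]
    exact h1
  have hds : ∀ x, deriv s x = e x := fun x => (hsd x).deriv
  have hm' : ∀ x, m x = (σ x ^ 2 * e x)⁻¹ := fun x => by rw [hm x, hds x]
  have hmeq : m = fun x => (σ x ^ 2 * e x)⁻¹ := funext hm'
  have hmcont : Continuous m := by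
    rw [hmeq]
    exact ((hσ.pow 2).mul hecont).inv₀ fun x =>
      (mul_pos (pow_pos (hσpos x) 2) (hepos x)).ne'
  have hmpos : ∀ x, 0 < m x := fun x => by
    rw [hm' x]
    exact inv_pos.mpr (mul_pos (pow_pos (hσpos x) 2) (hepos x))
  have hκpos : 0 < κ := by
    rw [hκ]
    apply inv_pos.mpr
    rw [MeasureTheory.integral_pos_iff_support_of_nonneg (fun x => (hmpos x).le) hmint]
    have : Function.support m = Set.univ := by
      ext x; simp [Function.mem_support, (hmpos x).ne']
    rw [this]
    simp
  have hκm_meas : Measurable fun x => ENNReal.ofReal (κ * m x) :=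
    (measurable_const.mul hmcont.measurable).ennreal_ofReal
  have hκm_lt : ∀ᵐ x : ℝ, ENNReal.ofReal (κ * m x) < ⊤ :=
    ae_of_all _ fun x => ENNReal.ofReal_lt_top
  have htoReal : ∀ x : ℝ, (ENNReal.ofReal (κ * m x)).toReal = κ * m x :=
    fun x => ENNReal.toReal_ofReal (mul_pos hκpos (hmpos x)).le
  -- integrability of f·m and its vanishing mean
  have hFint : Integrable (fun x => f x * m x) := by
    have h1 : Integrable (fun x => f x * (ENNReal.ofReal (κ * m x)).toReal) volume := by
      rw [← integrable_withDensity_iff hκm_meas hκm_lt, ← hμ]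
      exact hfint
    have h2 : Integrable (fun x => f x * (κ * m x)) volume := by
      refine h1.congr (ae_of_all _ fun x => ?_)
      show f x * (ENNReal.ofReal (κ * m x)).toReal = f x * (κ * m x)
      rw [htoReal x]
    have h3 := h2.const_mul κ⁻¹
    refine h3.congr (ae_of_all _ fun x => ?_)
    show κ⁻¹ * (f x * (κ * m x)) = f x * m x
    field_simp [hκpos.ne']
  have hFcont : Continuous fun x => f x * m x := hf.mul hmcont
  have hFzero : ∫ x, f x * m x = 0 := by
    have hdens_eq : (fun x => ENNReal.ofReal (κ * m x))
        = fun x => ((Real.toNNReal (κ * m x) : ℝ≥0) : ℝ≥0∞) := rfl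
    have hnn_meas : Measurable fun x => Real.toNNReal (κ * m x) :=
      (measurable_const.mul hmcont.measurable).real_toNNReal
    have h0 : ∫ x, f x ∂μ = ∫ x, (κ * m x) * f x := by
      rw [hμ, hdens_eq, integral_withDensity_eq_integral_smul hnn_meas]
      congr 1
      funext x
      rw [NNReal.smul_def, smul_eq_mul, Real.coe_toNNReal _ (mul_pos hκpos (hmpos x)).le]
    rw [hfmean] at h0
    have h1 : ∫ x, (κ * m x) * f x = κ * ∫ x, m x * f x := by
      simp_rw [mul_assoc]
      exact integral_const_mul κ _
    rw [h1] at h0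
    have h2 : ∫ x, m x * f x = 0 := by
      have := h0.symm
      rcases mul_eq_zero.mp this with h | h
      · exact absurd h hκpos.ne'
      · exact h
    rw [show (fun x => f x * m x) = fun x => m x * f x from funext fun x => mul_comm _ _]
    exact h2
  set T : ℝ → ℝ := fun x => ∫ u in Set.Ioi x, f u * m u with hT
  have hTdef : ∀ x, T x = ∫ u in Set.Ioi x, f u * m u := fun _ => rfl
  have hTid : ∀ x, T x = T 0 - ∫ u in (0:ℝ)..x, f u * m u := by
    intro x
    rcases le_or_gt 0 x with h | h
    · rw [intervalIntegral.integral_of_le h]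
      have hset : Set.Ioi (0:ℝ) = Set.Ioc 0 x ∪ Set.Ioi x := (Ioc_union_Ioi_eq_Ioi h).symm
      have hu := setIntegral_union (Ioc_disjoint_Ioi le_rfl) measurableSet_Ioi
        (hFint.integrableOn (s := Set.Ioc 0 x)) (hFint.integrableOn (s := Set.Ioi x))
      have : T 0 = (∫ u in Set.Ioc 0 x, f u * m u) + ∫ u in Set.Ioi x, f u * m u := by
        rw [hTdef 0, hset, hu]
      rw [hTdef x] at *
      linarith [this]
    · rw [intervalIntegral.integral_of_ge h.le]
      have hset : Set.Ioi x = Set.Ioc x 0 ∪ Set.Ioi (0:ℝ) := (Ioc_union_Ioi_eq_Ioi h.le).symm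
      have hu := setIntegral_union (Ioc_disjoint_Ioi le_rfl) measurableSet_Ioi
        (hFint.integrableOn (s := Set.Ioc x 0)) (hFint.integrableOn (s := Set.Ioi (0:ℝ)))
      have : T x = (∫ u in Set.Ioc x 0, f u * m u) + T 0 := by
        rw [hTdef x, hset, hu, hTdef 0]
      rw [this]
      ring
  have hTcont : Continuous T := by
    have hc : Continuous fun x => ∫ u in (0:ℝ)..x, f u * m u :=
      continuous_iff_continuousAt.mpr fun x =>
        ((hFcont.integral_hasStrictDerivAt 0 x).hasDerivAt).continuousAt
    have h2 : Continuous fun x => T 0 - ∫ u in (0:ℝ)..x, f u * m u :=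
      continuous_const.sub hc
    rw [funext hTid]
    exact h2
  have hT0top : Tendsto T atTop (nhds 0) := by
    have h1 : Tendsto (fun x : ℝ => ∫ u in (0:ℝ)..x, f u * m u) atTop (nhds (T 0)) := by
      have := intervalIntegral_tendsto_integral_Ioi (μ := volume) 0
        (hFint.integrableOn (s := Set.Ioi (0:ℝ))) tendsto_id
      exact this
    have h2 := (tendsto_const_nhds (x := T 0) (f := atTop)).sub h1
    rw [sub_self] at h2
    exact h2.congr fun x => (hTid x).symm
  have hT0bot : Tendsto T atBot (nhds 0) := by
    have hIic : ∫ u in Set.Iic (0:ℝ), f u * m u = -T 0 := by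
      have h := integral_Iic_add_Ioi (b := (0:ℝ))
        (hFint.integrableOn (s := Set.Iic (0:ℝ))) (hFint.integrableOn (s := Set.Ioi (0:ℝ)))
      rw [hFzero] at h
      rw [hTdef 0]
      linarith [h]
    have h1 : Tendsto (fun x : ℝ => ∫ u in x..(0:ℝ), f u * m u) atBot (nhds (-T 0)) := by
      have := intervalIntegral_tendsto_integral_Iic (μ := volume) 0
        (hFint.integrableOn (s := Set.Iic (0:ℝ))) tendsto_id
      rwa [hIic] at this
    have h2 := (tendsto_const_nhds (x := T 0) (f := atBot)).add h1
    rw [add_neg_cancel] at h2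
    refine h2.congr fun x => ?_
    rw [hTid x, intervalIntegral.integral_symm]
    ring
  -- derivative of g
  have hgd : ∀ x, deriv g x = 2 * (e x * T x) := by
    intro x
    have hgeq : g = fun y => 2 * ∫ v in (0:ℝ)..y, e v * T v := by
      funext y
      rw [hg y]
      congr 1
      refine intervalIntegral.integral_congr fun v _ => ?_
      rw [hds v, hTdef v]
    rw [hgeq]
    have hcont2 : Continuous fun v => e v * T v := hecont.mul hTcont
    exact (((hcont2.integral_hasStrictDerivAt 0 x).hasDerivAt).const_mul 2).deriv
  -- asymptotic hypotheses in reduced form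
  have htop' : Tendsto (fun x => (e x)⁻¹ * (|s x| ^ (2 - 1/α) * l |s x| * (f x * m x)))
      atTop (nhds fp) := by
    refine hftop.congr fun x => ?_
    rw [hds x, hm' x]
    field_simp
  have hbot0 : Tendsto (fun x => (e x)⁻¹ * (|s x| ^ (2 - 1/α) * l |s x| * (f x * m x)))
      atBot (nhds fm) := by
    refine hfbot.congr fun x => ?_
    rw [hds x, hm' x]
    field_simp
  -- upper tail
  obtain ⟨R2, hR2⟩ := tail_integrable e s T (fun x => f x * m x) l α fp hα hecont hepos
    hsd hFint hFcont hTdef hTcont hT0top hlcont hlpos hlsv htop'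
  -- lower tail via reflection
  have hsd' : ∀ x : ℝ, HasDerivAt (fun y => -s (-y)) (e (-x)) x := by
    intro x
    have h1 : HasDerivAt (fun y : ℝ => -y) (-1 : ℝ) x := (hasDerivAt_id x).neg
    have h2 := (hsd (-x)).comp x h1
    have h3 := h2.neg
    refine h3.congr_deriv ?_
    ring
  have hFint' : Integrable (fun x => f (-x) * m (-x)) := by
    have := hFint.comp_neg
    exact this
  have hFcont' : Continuous fun x => f (-x) * m (-x) :=
    (hf.comp continuous_neg).mul (hmcont.comp continuous_neg)
  have hTrefl : ∀ x : ℝ, (∫ u in Set.Ioi x, f (-u) * m (-u)) = -T (-x) := by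
    intro x
    have h1 : (∫ u in Set.Ioi x, f (-u) * m (-u)) = ∫ u in Set.Iic (-x), f u * m u :=
      integral_comp_neg_Ioi x fun u => f u * m u
    have h2 := integral_Iic_add_Ioi (b := -x)
      (hFint.integrableOn (s := Set.Iic (-x))) (hFint.integrableOn (s := Set.Ioi (-x)))
    rw [hFzero] at h2
    rw [h1, hTdef (-x)]
    linarith [h2]
  have hTdef' : ∀ x : ℝ, (fun y => -T (-y)) x = ∫ u in Set.Ioi x, f (-u) * m (-u) :=
    fun x => (hTrefl x).symm
  have hTcont' : Continuous fun y => -T (-y) := (hTcont.comp continuous_neg).neg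
  have hT0top' : Tendsto (fun y => -T (-y)) atTop (nhds 0) := by
    have h1 := (hT0bot.comp tendsto_neg_atTop_atBot).neg
    rw [neg_zero] at h1
    exact h1
  have hbot' : Tendsto (fun x => (e (-x))⁻¹ *
      (|(fun y => -s (-y)) x| ^ (2 - 1/α) * l |(fun y => -s (-y)) x| * (f (-x) * m (-x))))
      atTop (nhds fm) := by
    have h1 := hbot0.comp tendsto_neg_atTop_atBot
    refine h1.congr fun x => ?_
    simp only [Function.comp_apply]
    rw [show |(fun y => -s (-y)) x| = |s (-x)| by simp [abs_neg]]
  obtain ⟨R1, hR1⟩ := tail_integrable (fun x => e (-x)) (fun y => -s (-y)) (fun y => -T (-y))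
    (fun x => f (-x) * m (-x)) l α fm hα (hecont.comp continuous_neg)
    (fun x => hepos (-x)) hsd' hFint' hFcont' hTdef' hTcont' hT0top' hlcont hlpos hlsv hbot'
  -- transfer the reflected tail to the lower tail
  have hbotint : IntegrableOn (fun x => e x * T x ^ 2) (Set.Iic (-R1)) := by
    have h1 : (fun x => e (-x) * (fun y => -T (-y)) x ^ 2)
        = fun x => e (-x) * T (-x) ^ 2 := by
      funext x
      ring
    rw [h1] at hR1
    have h2 := (integrable_indicator_iff measurableSet_Ici).mpr hR1
    have h3 := h2.comp_neg
    have h4 : (fun x => (Set.Ici R1).indicator (fun y => e (-y) * T (-y) ^ 2) (-x))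
        = (Set.Iic (-R1)).indicator fun x => e x * T x ^ 2 := by
      funext x
      by_cases hx : x ≤ -R1
      · rw [indicator_of_mem (by simp only [Set.mem_Ici]; linarith : -x ∈ Set.Ici R1),
          indicator_of_mem (by simpa using hx : x ∈ Set.Iic (-R1))]
        simp
      · have hx1 : -R1 < x := not_le.mp hx
        rw [indicator_of_notMem (by simp only [Set.mem_Ici, not_le]; linarith),
          indicator_of_notMem (by simp only [Set.mem_Iic, not_le]; linarith)]
    rw [h4] at h3
    exact (integrable_indicator_iff measurableSet_Iic).mp h3
  -- glue
  have key : Integrable (fun x => e x * T x ^ 2) := by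
    set A : ℝ := -R1 with hA
    set B : ℝ := max R2 A with hB
    have hmid : IntegrableOn (fun x => e x * T x ^ 2) (Set.Icc A B) :=
      (hecont.mul (hTcont.pow 2)).integrableOn_Icc
    have htopint : IntegrableOn (fun x => e x * T x ^ 2) (Set.Ici B) :=
      hR2.mono_set (Set.Ici_subset_Ici.mpr (le_max_left _ _))
    have hcover : (Set.univ : Set ℝ) = Set.Iic A ∪ (Set.Icc A B ∪ Set.Ici B) := by
      ext x
      simp only [Set.mem_univ, Set.mem_union, Set.mem_Iic, Set.mem_Icc, Set.mem_Ici, true_iff]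
      rcases le_total x A with h | h
      · exact Or.inl h
      · rcases le_total x B with h2 | h2
        · exact Or.inr (Or.inl ⟨h, h2⟩)
        · exact Or.inr (Or.inr h2)
    rw [← integrableOn_univ, hcover]
    exact hbotint.union (hmid.union htopint)
  -- conclude
  rw [hμ, integrable_withDensity_iff hκm_meas hκm_lt]
  have hgoal_eq : (fun x => (deriv g x * σ x) ^ 2 * (ENNReal.ofReal (κ * m x)).toReal)
      = fun x => 4 * κ * (e x * T x ^ 2) := by
    funext x
    rw [htoReal x, hgd x, hm' x]
    field_simp [hσne x, hene x]
    ring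
  rw [hgoal_eq]
  exact key.const_mul (4 * κ)
end
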